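/- arXiv:1603.02997 — 4 statements merged into one kernel-verified Lean document; each statement's English description precedes it below -/
import Mathlib

section
/- Let b ∈ (0,∞], let g ∈ L²(0,b), and set u(x) = ∫₀ˣ (x−t) g(t) dt for x ∈ (0,b). Then ∫₀ᵇ |u(x)|²/x⁴ dx ≤ (16/9) ∫₀ᵇ |g(t)|² dt. Consequently, for every ν ∈ [0,1), ∫₀ᵇ |ν² − 1/4|² |u(x)|²/x⁴ dx ≤ c² ∫₀ᵇ |g(t)|² dt with c = (4/3)|ν² − 1/4| < 1. -/
open MeasureTheory Set Filter Function
open scoped ENNReal NNReal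

lemma intA {x : ℝ} (hx : 0 < x) :
    ∫⁻ t in Ioo (0:ℝ) x, ENNReal.ofReal ((x - t) * t ^ (-(1/2) : ℝ)) =
      ENNReal.ofReal ((4/3) * x ^ ((3:ℝ)/2)) := by
  have hmeas : Measurable fun t : ℝ => (x - t) * t ^ (-(1/2) : ℝ) :=
    (measurable_const.sub measurable_id).mul (measurable_id.pow_const _)
  have hnn : ∀ t ∈ Ioo (0:ℝ) x, 0 ≤ (x - t) * t ^ (-(1/2) : ℝ) := fun t ht =>
    mul_nonneg (by linarith [ht.2]) (Real.rpow_nonneg ht.1.le _)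
  have hint : IntegrableOn (fun t : ℝ => (x - t) * t ^ (-(1/2) : ℝ)) (Ioo 0 x) := by
    have h1 : IntegrableOn (fun t : ℝ => x * t ^ (-(1/2) : ℝ)) (Ioo 0 x) :=
      ((intervalIntegral.intervalIntegrable_rpow' (a := 0) (b := x)
        (r := -(1/2)) (by norm_num)).const_mul x).1.mono_set Ioo_subset_Ioc_self
    refine Integrable.mono h1 hmeas.aestronglyMeasurable.restrict ?_
    filter_upwards [ae_restrict_mem measurableSet_Ioo] with t ht
    rw [Real.norm_eq_abs, Real.norm_eq_abs, abs_of_nonneg (hnn t ht),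
      abs_of_nonneg (mul_nonneg (le_of_lt (lt_trans ht.1 ht.2))
        (Real.rpow_nonneg ht.1.le _))]
    exact mul_le_mul_of_nonneg_right (by linarith [ht.1]) (Real.rpow_nonneg ht.1.le _)
  rw [← ofReal_integral_eq_lintegral_ofReal hint
    ((ae_restrict_mem measurableSet_Ioo).mono fun t ht => hnn t ht)]
  congr 1
  rw [← integral_Ioc_eq_integral_Ioo, ← intervalIntegral.integral_of_le hx.le]
  have heq : EqOn (fun t : ℝ => (x - t) * t ^ (-(1/2) : ℝ))
      (fun t : ℝ => x * t ^ (-(1/2) : ℝ) - t ^ ((1:ℝ)/2)) (uIcc 0 x) := by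
    intro t ht
    rw [uIcc_of_le hx.le] at ht
    rcases eq_or_lt_of_le ht.1 with h | h
    · simp [← h, Real.zero_rpow (by norm_num : -(1/2:ℝ) ≠ 0),
        Real.zero_rpow (by norm_num : ((1:ℝ)/2) ≠ 0)]
    · have h2 : t ^ ((1:ℝ)/2) = t * t ^ (-(1/2):ℝ) := by
        rw [show ((1:ℝ)/2) = -(1/2) + 1 by norm_num, Real.rpow_add_one h.ne']
        ring
      simp only [sub_mul, h2]
  rw [intervalIntegral.integral_congr heq]
  rw [intervalIntegral.integral_sub
    ((intervalIntegral.intervalIntegrable_rpow' (by norm_num)).const_mul x)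
    (intervalIntegral.intervalIntegrable_rpow' (by norm_num)),
    intervalIntegral.integral_const_mul, integral_rpow (Or.inl (by norm_num)),
    integral_rpow (Or.inl (by norm_num))]
  rw [Real.zero_rpow (by norm_num), Real.zero_rpow (by norm_num)]
  have e1 : x ^ ((-(1/2):ℝ) + 1) = x ^ (-(1/2):ℝ) * x := Real.rpow_add_one hx.ne' _
  have e2 : x ^ (((1:ℝ)/2) + 1) = x ^ ((1:ℝ)/2) * x := Real.rpow_add_one hx.ne' _
  have e3 : x ^ ((3:ℝ)/2) = x ^ ((1:ℝ)/2) * x := by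
    rw [show ((3:ℝ)/2) = 1/2 + 1 by norm_num, Real.rpow_add_one hx.ne']
  have e4 : x ^ (-(1/2):ℝ) * x = x ^ ((1:ℝ)/2) := by
    rw [← Real.rpow_add_one hx.ne']; norm_num
  rw [sub_zero, sub_zero, e1, e2, e3, e4]
  ring

lemma intB {t : ℝ} (ht : 0 < t) :
    ∫⁻ x in Ioi t, ENNReal.ofReal ((x - t) * x ^ (-(5/2) : ℝ)) =
      ENNReal.ofReal ((4/3) * t ^ (-(1/2):ℝ)) := by
  have hpos : ∀ x ∈ Ioi t, (0:ℝ) < x := fun x hx => ht.trans hx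
  have hnn : ∀ x ∈ Ioi t, 0 ≤ (x - t) * x ^ (-(5/2) : ℝ) := fun x hx =>
    mul_nonneg (by linarith [mem_Ioi.mp hx]) (Real.rpow_nonneg (hpos x hx).le _)
  have hmeas : Measurable fun x : ℝ => (x - t) * x ^ (-(5/2) : ℝ) :=
    (measurable_id.sub measurable_const).mul (measurable_id.pow_const _)
  have i1 : IntegrableOn (fun x : ℝ => x ^ (-(3/2) : ℝ)) (Ioi t) :=
    integrableOn_Ioi_rpow_of_lt (by norm_num) ht
  have i2 : IntegrableOn (fun x : ℝ => t * x ^ (-(5/2) : ℝ)) (Ioi t) :=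
    (integrableOn_Ioi_rpow_of_lt (by norm_num) ht).const_mul t
  have heq : EqOn (fun x : ℝ => (x - t) * x ^ (-(5/2) : ℝ))
      (fun x : ℝ => x ^ (-(3/2) : ℝ) - t * x ^ (-(5/2) : ℝ)) (Ioi t) := by
    intro x hx
    have hx0 : (0:ℝ) < x := hpos x hx
    have e : x ^ (-(3/2) : ℝ) = x * x ^ (-(5/2) : ℝ) := by
      rw [show (-(3/2):ℝ) = -(5/2) + 1 by norm_num, Real.rpow_add_one hx0.ne']
      ring
    simp only [e]; ring
  have hint : IntegrableOn (fun x : ℝ => (x - t) * x ^ (-(5/2) : ℝ)) (Ioi t) :=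
    IntegrableOn.congr_fun (i1.sub i2) (fun x hx => (heq hx).symm) measurableSet_Ioi
  rw [← ofReal_integral_eq_lintegral_ofReal hint
    ((ae_restrict_mem measurableSet_Ioi).mono fun x hx => hnn x hx)]
  congr 1
  rw [setIntegral_congr_fun measurableSet_Ioi heq, integral_sub i1 i2,
    MeasureTheory.integral_const_mul, integral_Ioi_rpow_of_lt (by norm_num) ht,
    integral_Ioi_rpow_of_lt (by norm_num) ht]
  have e1 : t ^ ((-(3/2):ℝ) + 1) = t ^ (-(1/2):ℝ) := by norm_num
  have e2 : t * t ^ ((-(5/2):ℝ) + 1) = t ^ (-(1/2):ℝ) := by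
    rw [mul_comm, ← Real.rpow_add_one ht.ne']; norm_num
  rw [e1]
  linear_combination (-(2:ℝ)/3) * e2

lemma CSlem {x : ℝ} (hx : 0 < x) {G : ℝ → ℝ≥0∞}
    (hG : AEMeasurable G (volume.restrict (Ioo 0 x)))
    (hA : ∫⁻ t in Ioo (0:ℝ) x, ENNReal.ofReal ((x - t) * t ^ (-(1/2) : ℝ)) =
      ENNReal.ofReal ((4/3) * x ^ ((3:ℝ)/2))) :
    (∫⁻ t in Ioo (0:ℝ) x, ENNReal.ofReal (x - t) * G t) ^ 2 ≤
      ENNReal.ofReal ((4/3) * x ^ ((3:ℝ)/2)) *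
        ∫⁻ t in Ioo (0:ℝ) x, ENNReal.ofReal ((x - t) * t ^ ((1/2):ℝ)) * G t ^ 2 := by
  have hconj : (2:ℝ).HolderConjugate 2 := Real.HolderConjugate.two_two
  have hm1 : AEMeasurable
      (fun t => ENNReal.ofReal ((x - t) * t ^ (-(1/2) : ℝ)) ^ ((1:ℝ)/2))
      (volume.restrict (Ioo 0 x)) :=
    (((measurable_const.sub measurable_id).mul
      (measurable_id.pow_const _)).ennreal_ofReal.pow_const _).aemeasurable
  have hm2 : AEMeasurable
      (fun t => ENNReal.ofReal ((x - t) * t ^ ((1/2) : ℝ)) ^ ((1:ℝ)/2) * G t)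
      (volume.restrict (Ioo 0 x)) :=
    ((((measurable_const.sub measurable_id).mul
      (measurable_id.pow_const _)).ennreal_ofReal.pow_const _).aemeasurable.mul hG)
  -- pointwise identity on Ioo 0 x
  have hpt : ∀ᵐ t ∂(volume.restrict (Ioo (0:ℝ) x)),
      ENNReal.ofReal (x - t) * G t =
        (ENNReal.ofReal ((x - t) * t ^ (-(1/2) : ℝ)) ^ ((1:ℝ)/2)) *
        (ENNReal.ofReal ((x - t) * t ^ ((1/2) : ℝ)) ^ ((1:ℝ)/2) * G t) := by
    filter_upwards [ae_restrict_mem measurableSet_Ioo] with t ht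
    have htpos : (0:ℝ) < t := ht.1
    have hxt : (0:ℝ) ≤ x - t := by linarith [ht.2]
    rw [← mul_assoc]
    congr 1
    have ht0 : t ^ (-(1/2):ℝ) * t ^ ((1/2):ℝ) = 1 := by
      rw [← Real.rpow_add htpos]; norm_num
    rw [← ENNReal.mul_rpow_of_nonneg _ _ (by norm_num : (0:ℝ) ≤ 1/2),
      ← ENNReal.ofReal_mul (mul_nonneg hxt (Real.rpow_nonneg htpos.le _)),
      show (x - t) * t ^ (-(1/2):ℝ) * ((x - t) * t ^ ((1/2):ℝ)) = (x - t) ^ 2 by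
        linear_combination (x - t)^2 * ht0,
      ENNReal.ofReal_pow hxt, ← ENNReal.rpow_natCast (ENNReal.ofReal (x - t)) 2,
      ← ENNReal.rpow_mul]
    norm_num
  calc (∫⁻ t in Ioo (0:ℝ) x, ENNReal.ofReal (x - t) * G t) ^ 2
      = (∫⁻ t in Ioo (0:ℝ) x,
          (ENNReal.ofReal ((x - t) * t ^ (-(1/2) : ℝ)) ^ ((1:ℝ)/2)) *
          (ENNReal.ofReal ((x - t) * t ^ ((1/2) : ℝ)) ^ ((1:ℝ)/2) * G t)) ^ 2 := by
        rw [lintegral_congr_ae hpt]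
    _ ≤ ((∫⁻ t in Ioo (0:ℝ) x,
            (ENNReal.ofReal ((x - t) * t ^ (-(1/2) : ℝ)) ^ ((1:ℝ)/2)) ^ (2:ℝ)) ^ ((1:ℝ)/2) *
         (∫⁻ t in Ioo (0:ℝ) x,
            (ENNReal.ofReal ((x - t) * t ^ ((1/2) : ℝ)) ^ ((1:ℝ)/2) * G t) ^ (2:ℝ)) ^ ((1:ℝ)/2)) ^ 2 := by
        refine pow_le_pow_left₀ zero_le ?_ 2
        exact ENNReal.lintegral_mul_le_Lp_mul_Lq _ hconj hm1 hm2
    _ ≤ ENNReal.ofReal ((4/3) * x ^ ((3:ℝ)/2)) *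
        ∫⁻ t in Ioo (0:ℝ) x, ENNReal.ofReal ((x - t) * t ^ ((1/2):ℝ)) * G t ^ 2 := by
        have e1 : ∀ y : ℝ≥0∞, (y ^ ((1:ℝ)/2)) ^ (2:ℝ) = y := fun y => by
          rw [← ENNReal.rpow_mul]; norm_num
        have eint1 : (∫⁻ t in Ioo (0:ℝ) x,
            (ENNReal.ofReal ((x - t) * t ^ (-(1/2) : ℝ)) ^ ((1:ℝ)/2)) ^ (2:ℝ)) =
            ENNReal.ofReal ((4/3) * x ^ ((3:ℝ)/2)) := by
          rw [← hA]; exact lintegral_congr fun t => e1 _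
        have eint2 : (∫⁻ t in Ioo (0:ℝ) x,
            (ENNReal.ofReal ((x - t) * t ^ ((1/2) : ℝ)) ^ ((1:ℝ)/2) * G t) ^ (2:ℝ)) =
            ∫⁻ t in Ioo (0:ℝ) x, ENNReal.ofReal ((x - t) * t ^ ((1/2):ℝ)) * G t ^ 2 := by
          refine lintegral_congr fun t => ?_
          rw [ENNReal.mul_rpow_of_nonneg _ _ (by norm_num : (0:ℝ) ≤ 2), e1,
            ← ENNReal.rpow_natCast (G t) 2]
          norm_num
        rw [eint1, eint2, mul_pow, ← ENNReal.rpow_natCast (_ ^ ((1:ℝ)/2)) 2,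
          ← ENNReal.rpow_natCast (_ ^ ((1:ℝ)/2)) 2, ← ENNReal.rpow_mul, ← ENNReal.rpow_mul]
        norm_num

lemma key (S : Set ℝ) (hSm : MeasurableSet S) (hS0 : S ⊆ Ioi 0)
    (hSI : ∀ x ∈ S, Ioo 0 x ⊆ S)
    (g : ℝ → ℂ) (hg : AEMeasurable g (volume.restrict S))
    (u : ℝ → ℂ) (hu : ∀ x ∈ S, u x = ∫ t in (0:ℝ)..x, ((x - t : ℝ) : ℂ) * g t) :
    ∫⁻ x in S, ENNReal.ofReal (‖u x‖ ^ 2 / x ^ 4)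
      ≤ ENNReal.ofReal (16/9) * ∫⁻ t in S, ENNReal.ofReal (‖g t‖ ^ 2) := by
  have hGm : AEMeasurable (fun t => (‖g t‖₊ : ℝ≥0∞)) (volume.restrict S) := hg.enorm
  -- the kernel
  set F : ℝ → ℝ → ℝ≥0∞ := fun x t => (Ioo 0 x).indicator
    (fun s => ENNReal.ofReal ((4/3) * ((x - s) * s ^ ((1/2):ℝ) * x ^ (-(5/2):ℝ)))
      * (‖g s‖₊ : ℝ≥0∞) ^ 2) t with hF
  -- Step 1 : pointwise bound
  have key1 : ∀ x ∈ S, ENNReal.ofReal (‖u x‖ ^ 2 / x ^ 4) ≤ ∫⁻ t in S, F x t := by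
    intro x hx
    have hx0 : (0:ℝ) < x := hS0 hx
    have hsub : Ioo (0:ℝ) x ⊆ S := hSI x hx
    have hGmx : AEMeasurable (fun t => (‖g t‖₊ : ℝ≥0∞)) (volume.restrict (Ioo 0 x)) :=
      hGm.mono_measure (Measure.restrict_mono hsub le_rfl)
    -- bound on ‖u x‖
    have hub : (‖u x‖₊ : ℝ≥0∞) ≤
        ∫⁻ t in Ioo (0:ℝ) x, ENNReal.ofReal (x - t) * (‖g t‖₊ : ℝ≥0∞) := by
      rw [hu x hx, intervalIntegral.integral_of_le hx0.le]
      refine le_trans (enorm_integral_le_lintegral_enorm _) ?_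
      rw [← setLIntegral_congr (Ioo_ae_eq_Ioc (μ := volume) (a := (0:ℝ)) (b := x))]
      refine setLIntegral_mono' measurableSet_Ioo (fun t ht => le_of_eq ?_)
      rw [enorm_eq_nnnorm, nnnorm_mul, ENNReal.coe_mul, Complex.nnnorm_real, ← enorm_eq_nnnorm,
        Real.enorm_eq_ofReal (by linarith [ht.2] : (0:ℝ) ≤ x - t)]
    -- Cauchy-Schwarz
    have hCS := CSlem hx0 hGmx (intA hx0)
    -- rewrite LHS
    have hdiv : ENNReal.ofReal (‖u x‖ ^ 2 / x ^ 4) =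
        ((‖u x‖₊ : ℝ≥0∞)) ^ 2 / ENNReal.ofReal (x ^ 4) := by
      rw [ENNReal.ofReal_div_of_pos (pow_pos hx0 4), ENNReal.ofReal_pow (norm_nonneg _),
        ofReal_norm, enorm_eq_nnnorm]
    rw [hdiv]
    have step : ((‖u x‖₊ : ℝ≥0∞)) ^ 2 / ENNReal.ofReal (x ^ 4) ≤
        (ENNReal.ofReal ((4/3) * x ^ ((3:ℝ)/2)) / ENNReal.ofReal (x ^ 4)) *
        ∫⁻ t in Ioo (0:ℝ) x, ENNReal.ofReal ((x - t) * t ^ ((1/2):ℝ))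
          * (‖g t‖₊ : ℝ≥0∞) ^ 2 := by
      rw [ENNReal.div_eq_inv_mul, ENNReal.div_eq_inv_mul, mul_assoc]
      refine mul_le_mul_right ?_ _
      exact le_trans (pow_le_pow_left' hub 2) hCS
    refine le_trans step ?_
    -- simplify the constant
    have hc : ENNReal.ofReal ((4/3) * x ^ ((3:ℝ)/2)) / ENNReal.ofReal (x ^ 4) =
        ENNReal.ofReal ((4/3) * x ^ (-(5/2):ℝ)) := by
      rw [← ENNReal.ofReal_div_of_pos (pow_pos hx0 4)]
      congr 1
      rw [mul_div_assoc, ← Real.rpow_natCast x 4, ← Real.rpow_sub hx0]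
      norm_num
    rw [hc]
    -- pull the constant into the integral and identify with F
    rw [← lintegral_const_mul' _ _ ENNReal.ofReal_ne_top]
    have : ∫⁻ t in Ioo (0:ℝ) x, ENNReal.ofReal ((4/3) * x ^ (-(5/2):ℝ)) *
        (ENNReal.ofReal ((x - t) * t ^ ((1/2):ℝ)) * (‖g t‖₊ : ℝ≥0∞) ^ 2) =
        ∫⁻ t in Ioo (0:ℝ) x,
          ENNReal.ofReal ((4/3) * ((x - t) * t ^ ((1/2):ℝ) * x ^ (-(5/2):ℝ)))
            * (‖g t‖₊ : ℝ≥0∞) ^ 2 := by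
      refine setLIntegral_congr_fun measurableSet_Ioo (fun t ht => ?_)
      rw [← mul_assoc, ← ENNReal.ofReal_mul (by positivity)]
      congr 2
      ring
    rw [this, hF]
    rw [lintegral_indicator measurableSet_Ioo, Measure.restrict_restrict measurableSet_Ioo,
      inter_eq_left.mpr hsub]
  refine le_trans (setLIntegral_mono' hSm key1) ?_
  -- Step 2 : measurability of uncurried kernel, swap
  have hBm : MeasurableSet {p : ℝ × ℝ | 0 < p.2 ∧ p.2 < p.1} :=
    (measurableSet_lt measurable_const measurable_snd).inter
      (measurableSet_lt measurable_snd measurable_fst)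
  have hφm : AEMeasurable (fun p : ℝ × ℝ =>
      ENNReal.ofReal ((4/3) * ((p.1 - p.2) * p.2 ^ ((1/2):ℝ) * p.1 ^ (-(5/2):ℝ)))
        * (‖g p.2‖₊ : ℝ≥0∞) ^ 2)
      ((volume.restrict S).prod (volume.restrict S)) := by
    refine AEMeasurable.fun_mul ?_ ?_
    · exact (Measurable.ennreal_ofReal (by fun_prop)).aemeasurable
    · exact (hGm.comp_quasiMeasurePreserving
        Measure.quasiMeasurePreserving_snd).pow_const 2
  have hFm : AEMeasurable (uncurry F) ((volume.restrict S).prod (volume.restrict S)) := by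
    have huf : uncurry F = fun p : ℝ × ℝ =>
        ({q : ℝ × ℝ | 0 < q.2 ∧ q.2 < q.1}).indicator
          (fun q => ENNReal.ofReal ((4/3) * ((q.1 - q.2) * q.2 ^ ((1/2):ℝ) * q.1 ^ (-(5/2):ℝ)))
            * (‖g q.2‖₊ : ℝ≥0∞) ^ 2) p := by
      funext p
      simp only [uncurry, hF, Set.indicator_apply, mem_Ioo, mem_setOf_eq]
    rw [huf]
    exact hφm.indicator hBm
  rw [lintegral_lintegral_swap hFm]
  -- Step 3 : inner integral bound for a.e. t
  have key2 : ∀ t ∈ S, (∫⁻ x in S, F x t) ≤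
      ENNReal.ofReal (16/9) * (‖g t‖₊ : ℝ≥0∞) ^ 2 := by
    intro t ht
    have ht0 : (0:ℝ) < t := hS0 ht
    have hre : ∀ x : ℝ, F x t = (Ioi t).indicator
        (fun x => ENNReal.ofReal ((4/3) * ((x - t) * t ^ ((1/2):ℝ) * x ^ (-(5/2):ℝ)))
          * (‖g t‖₊ : ℝ≥0∞) ^ 2) x := by
      intro x
      by_cases h : t < x <;>
        simp [hF, Set.indicator_apply, mem_Ioo, mem_Ioi, h, ht0]
    calc ∫⁻ x in S, F x t
        = ∫⁻ x in S, (Ioi t).indicator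
            (fun x => ENNReal.ofReal ((4/3) * ((x - t) * t ^ ((1/2):ℝ) * x ^ (-(5/2):ℝ)))
              * (‖g t‖₊ : ℝ≥0∞) ^ 2) x := lintegral_congr fun x => by rw [hre x]
      _ ≤ ∫⁻ x in Ioi t,
            ENNReal.ofReal ((4/3) * ((x - t) * t ^ ((1/2):ℝ) * x ^ (-(5/2):ℝ)))
              * (‖g t‖₊ : ℝ≥0∞) ^ 2 := by
          rw [lintegral_indicator measurableSet_Ioi,
            Measure.restrict_restrict measurableSet_Ioi]
          exact lintegral_mono' (Measure.restrict_mono inter_subset_left le_rfl) le_rfl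
      _ = (∫⁻ x in Ioi t,
            ENNReal.ofReal ((4/3) * t ^ ((1/2):ℝ)) *
              ENNReal.ofReal ((x - t) * x ^ (-(5/2):ℝ))) * (‖g t‖₊ : ℝ≥0∞) ^ 2 := by
          rw [← lintegral_mul_const' _ _ (ENNReal.pow_ne_top ENNReal.coe_ne_top)]
          refine lintegral_congr fun x => ?_
          congr 1
          rw [← ENNReal.ofReal_mul (by positivity)]
          congr 1
          ring
      _ ≤ ENNReal.ofReal (16/9) * (‖g t‖₊ : ℝ≥0∞) ^ 2 := by
          rw [lintegral_const_mul' _ _ ENNReal.ofReal_ne_top, intB ht0,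
            ← ENNReal.ofReal_mul (by positivity)]
          refine mul_le_mul_left (le_of_eq ?_) _
          congr 1
          have e : t ^ ((1/2):ℝ) * t ^ (-(1/2):ℝ) = 1 := by
            rw [← Real.rpow_add ht0]; norm_num
          linear_combination (16/9:ℝ) * e
  calc ∫⁻ t in S, ∫⁻ x in S, F x t
      ≤ ∫⁻ t in S, ENNReal.ofReal (16/9) * (‖g t‖₊ : ℝ≥0∞) ^ 2 :=
        setLIntegral_mono' hSm key2
    _ = ENNReal.ofReal (16/9) * ∫⁻ t in S, ENNReal.ofReal (‖g t‖ ^ 2) := by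
        rw [lintegral_const_mul' _ _ ENNReal.ofReal_ne_top]
        congr 1
        refine lintegral_congr fun t => ?_
        rw [ENNReal.ofReal_pow (norm_nonneg _), ofReal_norm, enorm_eq_nnnorm]


/-- Let `b ∈ (0,∞]` (the set `S` is `(0,b)` for finite `b > 0`, or the whole half-line
`(0,∞)`), let `g ∈ L²(0,b)` and `u(x) = ∫₀ˣ (x−t) g(t) dt`. Then
`∫₀ᵇ |u(x)|²/x⁴ dx ≤ (16/9) ∫₀ᵇ |g|²`; consequently, for every `ν ∈ [0,1)`,
`∫₀ᵇ |ν²−1/4|² |u(x)|²/x⁴ dx ≤ c² ∫₀ᵇ |g|²` with `c = (4/3)|ν²−1/4| < 1`. -/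
theorem stmt3 (S : Set ℝ) (hS : S = Ioi (0:ℝ) ∨ ∃ b : ℝ, 0 < b ∧ S = Ioo 0 b)
    (g : ℝ → ℂ) (hg : MemLp g 2 (volume.restrict S))
    (u : ℝ → ℂ) (hu : ∀ x ∈ S, u x = ∫ t in (0:ℝ)..x, ((x - t : ℝ) : ℂ) * g t) :
    (∫⁻ x in S, ENNReal.ofReal (‖u x‖ ^ 2 / x ^ 4)
      ≤ ENNReal.ofReal (16/9) * ∫⁻ t in S, ENNReal.ofReal (‖g t‖ ^ 2)) ∧
    ∀ ν : ℝ, ν ∈ Ico (0:ℝ) 1 →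
      (∫⁻ x in S, ENNReal.ofReal (|ν ^ 2 - 1/4| ^ 2 * (‖u x‖ ^ 2 / x ^ 4))
        ≤ ENNReal.ofReal (((4/3) * |ν ^ 2 - 1/4|) ^ 2)
            * ∫⁻ t in S, ENNReal.ofReal (‖g t‖ ^ 2)) ∧
      (4/3) * |ν ^ 2 - 1/4| < 1 := by
  have hSm : MeasurableSet S := by
    rcases hS with h | ⟨b, hb, h⟩ <;> rw [h]
    exacts [measurableSet_Ioi, measurableSet_Ioo]
  have hS0 : S ⊆ Ioi 0 := by
    rcases hS with h | ⟨b, hb, h⟩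
    · rw [h]
    · rw [h]; exact Ioo_subset_Ioi_self
  have hSI : ∀ x ∈ S, Ioo 0 x ⊆ S := by
    rcases hS with h | ⟨b, hb, h⟩ <;> rw [h]
    · exact fun x hx => Ioo_subset_Ioi_self
    · exact fun x hx => Ioo_subset_Ioo le_rfl (le_of_lt hx.2)
  have hmain := key S hSm hS0 hSI g hg.aestronglyMeasurable.aemeasurable u hu
  refine ⟨hmain, fun ν hν => ?_⟩
  have hc : |ν ^ 2 - 1/4| < 3/4 := by
    rw [abs_lt]
    constructor <;> nlinarith [hν.1, hν.2, sq_nonneg ν]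
  refine ⟨?_, by linarith [abs_nonneg (ν ^ 2 - 1/4)]⟩
  have habs : (0:ℝ) ≤ |ν ^ 2 - 1/4| ^ 2 := sq_nonneg _
  calc ∫⁻ x in S, ENNReal.ofReal (|ν ^ 2 - 1/4| ^ 2 * (‖u x‖ ^ 2 / x ^ 4))
      = ENNReal.ofReal (|ν ^ 2 - 1/4| ^ 2) *
          ∫⁻ x in S, ENNReal.ofReal (‖u x‖ ^ 2 / x ^ 4) := by
        rw [← lintegral_const_mul' _ _ ENNReal.ofReal_ne_top]
        exact lintegral_congr fun x => (ENNReal.ofReal_mul habs).symm ▸ rfl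
    _ ≤ ENNReal.ofReal (|ν ^ 2 - 1/4| ^ 2) *
          (ENNReal.ofReal (16/9) * ∫⁻ t in S, ENNReal.ofReal (‖g t‖ ^ 2)) :=
        mul_le_mul_right hmain _
    _ = ENNReal.ofReal (((4/3) * |ν ^ 2 - 1/4|) ^ 2)
          * ∫⁻ t in S, ENNReal.ofReal (‖g t‖ ^ 2) := by
        rw [← mul_assoc, ← ENNReal.ofReal_mul habs]
        congr 2
        rw [mul_pow]
        ring
end

section
/- Let ν ∈ (0,1), let b ∈ (0,∞], and let u : (0,b) → ℂ satisfy u(x) = ∫₀ˣ u'(t) dt with u' ∈ L²(0,b). Then min{4ν², 1} · ∫₀ᵇ |u'(x)|² dx ≤ ∫₀ᵇ |u'(x)|² dx + (ν² − 1/4)∫₀ᵇ |u(x)|²/x² dx ≤ (1 + |4ν² − 1|) · ∫₀ᵇ |u'(x)|² dx. In particular, on functions vanishing at 0 the energy norm of the Bessel form with parameter ν ∈ (0,1) is equivalent to the H¹-seminorm. -/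
open MeasureTheory Set Filter

section StmtAux

open ENNReal

private lemma stmt5_step1 (x : ℝ) (hx : 0 < x) (v : ℝ → ℂ) (hvm : StronglyMeasurable v) :
    (‖∫ t in Ioc (0:ℝ) x, v t‖₊ : ℝ≥0∞) ^ (2:ℝ) ≤
      ENNReal.ofReal (2 * x ^ ((2:ℝ)⁻¹)) *
        ∫⁻ t in Ioc (0:ℝ) x, ENNReal.ofReal (t ^ ((2:ℝ)⁻¹)) * (‖v t‖₊ : ℝ≥0∞) ^ (2:ℝ) := by
  have h1 : (‖∫ t in Ioc (0:ℝ) x, v t‖₊ : ℝ≥0∞) ≤ ∫⁻ t in Ioc (0:ℝ) x, (‖v t‖₊ : ℝ≥0∞) :=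
    enorm_integral_le_lintegral_enorm _
  set f : ℝ → ℝ≥0∞ := fun t => ENNReal.ofReal (t ^ (-(4:ℝ)⁻¹)) with hf
  set g : ℝ → ℝ≥0∞ := fun t => ENNReal.ofReal (t ^ ((4:ℝ)⁻¹)) * (‖v t‖₊ : ℝ≥0∞) with hg
  have h2 : ∫⁻ t in Ioc (0:ℝ) x, (‖v t‖₊ : ℝ≥0∞) = ∫⁻ t in Ioc (0:ℝ) x, (f * g) t := by
    refine setLIntegral_congr_fun measurableSet_Ioc (fun t ht => ?_)
    simp only [hf, hg, Pi.mul_apply, ← mul_assoc, ← ENNReal.ofReal_mul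
      (Real.rpow_nonneg ht.1.le _), ← Real.rpow_add ht.1]
    norm_num
  have hfm : AEMeasurable f (volume.restrict (Ioc (0:ℝ) x)) := by
    apply Measurable.aemeasurable; fun_prop
  have hgm : AEMeasurable g (volume.restrict (Ioc (0:ℝ) x)) := by
    apply Measurable.aemeasurable
    exact (ENNReal.measurable_ofReal.comp (by fun_prop)).mul
      hvm.measurable.nnnorm.coe_nnreal_ennreal
  have hpq : (2:ℝ).HolderConjugate 2 := Real.holderConjugate_iff.2 ⟨one_lt_two, by norm_num⟩
  have h3 := ENNReal.lintegral_mul_le_Lp_mul_Lq (volume.restrict (Ioc (0:ℝ) x)) hpq hfm hgm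
  -- compute ∫⁻ f ^ 2
  have hf2 : ∫⁻ t in Ioc (0:ℝ) x, f t ^ (2:ℝ) = ENNReal.ofReal (2 * x ^ ((2:ℝ)⁻¹)) := by
    have e1 : ∫⁻ t in Ioc (0:ℝ) x, f t ^ (2:ℝ)
        = ∫⁻ t in Ioc (0:ℝ) x, ENNReal.ofReal (t ^ (-(2:ℝ)⁻¹)) := by
      refine setLIntegral_congr_fun measurableSet_Ioc (fun t ht => ?_)
      rw [hf, ENNReal.ofReal_rpow_of_pos (Real.rpow_pos_of_pos ht.1 _),
        ← Real.rpow_mul ht.1.le]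
      norm_num
    have hint : IntegrableOn (fun t : ℝ => t ^ (-(2:ℝ)⁻¹)) (Ioc 0 x) := by
      have := intervalIntegral.intervalIntegrable_rpow' (a := 0) (b := x)
        (r := -(2:ℝ)⁻¹) (by norm_num)
      rwa [intervalIntegrable_iff_integrableOn_Ioc_of_le hx.le] at this
    rw [e1, ← ofReal_integral_eq_lintegral_ofReal hint] ; swap
    · filter_upwards [ae_restrict_mem measurableSet_Ioc] with t ht
      exact Real.rpow_nonneg ht.1.le _
    congr 1
    rw [← intervalIntegral.integral_of_le hx.le,
      integral_rpow (Or.inl (by norm_num))]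
    rw [Real.zero_rpow (by norm_num)]
    norm_num
    rw [div_eq_mul_inv]
    ring
  -- g ^ 2 = F
  have hg2 : ∀ t ∈ Ioc (0:ℝ) x, g t ^ (2:ℝ)
      = ENNReal.ofReal (t ^ ((2:ℝ)⁻¹)) * (‖v t‖₊ : ℝ≥0∞) ^ (2:ℝ) := by
    intro t ht
    rw [hg, ENNReal.mul_rpow_of_nonneg _ _ (by norm_num),
      ENNReal.ofReal_rpow_of_pos (Real.rpow_pos_of_pos ht.1 _),
      ← Real.rpow_mul ht.1.le]
    norm_num
  have h4 : ∫⁻ t in Ioc (0:ℝ) x, g t ^ (2:ℝ)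
      = ∫⁻ t in Ioc (0:ℝ) x, ENNReal.ofReal (t ^ ((2:ℝ)⁻¹)) * (‖v t‖₊ : ℝ≥0∞) ^ (2:ℝ) :=
    setLIntegral_congr_fun measurableSet_Ioc hg2
  have h5 : (‖∫ t in Ioc (0:ℝ) x, v t‖₊ : ℝ≥0∞) ≤
      (ENNReal.ofReal (2 * x ^ ((2:ℝ)⁻¹))) ^ ((2:ℝ)⁻¹) *
        (∫⁻ t in Ioc (0:ℝ) x, ENNReal.ofReal (t ^ ((2:ℝ)⁻¹)) * (‖v t‖₊ : ℝ≥0∞) ^ (2:ℝ)) ^ ((2:ℝ)⁻¹) := by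
    calc (‖∫ t in Ioc (0:ℝ) x, v t‖₊ : ℝ≥0∞) ≤ ∫⁻ t in Ioc (0:ℝ) x, (f * g) t := h2 ▸ h1
    _ ≤ _ := by
        refine h3.trans_eq ?_
        rw [hf2, h4]
        norm_num
  calc (‖∫ t in Ioc (0:ℝ) x, v t‖₊ : ℝ≥0∞) ^ (2:ℝ)
      ≤ ((ENNReal.ofReal (2 * x ^ ((2:ℝ)⁻¹))) ^ ((2:ℝ)⁻¹) *
        (∫⁻ t in Ioc (0:ℝ) x, ENNReal.ofReal (t ^ ((2:ℝ)⁻¹)) * (‖v t‖₊ : ℝ≥0∞) ^ (2:ℝ)) ^ ((2:ℝ)⁻¹)) ^ (2:ℝ) :=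
        ENNReal.rpow_le_rpow h5 (by norm_num)
    _ = _ := by
        rw [ENNReal.mul_rpow_of_nonneg _ _ (by norm_num), ← ENNReal.rpow_mul, ← ENNReal.rpow_mul]
        norm_num

private lemma stmt5_hardy (S : Set ℝ) (hSm : MeasurableSet S) (hSsub : S ⊆ Ioi (0:ℝ))
    (hIocS : ∀ x ∈ S, Ioc (0:ℝ) x ⊆ S)
    (v : ℝ → ℂ) (hvm : StronglyMeasurable v) (u : ℝ → ℂ)
    (hkey : ∀ x ∈ S, (‖u x‖₊ : ℝ≥0∞) ^ (2:ℝ) ≤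
      ENNReal.ofReal (2 * x ^ ((2:ℝ)⁻¹)) *
        ∫⁻ t in Ioc (0:ℝ) x, ENNReal.ofReal (t ^ ((2:ℝ)⁻¹)) * (‖v t‖₊ : ℝ≥0∞) ^ (2:ℝ)) :
    ∫⁻ x in S, (‖u x‖₊ : ℝ≥0∞) ^ (2:ℝ) * ENNReal.ofReal (x ^ (-(2:ℝ)))
      ≤ 4 * ∫⁻ t in S, (‖v t‖₊ : ℝ≥0∞) ^ (2:ℝ) := by
  set F : ℝ → ℝ≥0∞ := fun t => ENNReal.ofReal (t ^ ((2:ℝ)⁻¹)) * (‖v t‖₊ : ℝ≥0∞) ^ (2:ℝ) with hF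
  have hFm : Measurable F :=
    (ENNReal.measurable_ofReal.comp (by fun_prop)).mul
      (hvm.measurable.nnnorm.coe_nnreal_ennreal.pow_const _)
  set c : ℝ → ℝ≥0∞ := fun x => ENNReal.ofReal (2 * x ^ (-(3:ℝ)/2)) with hc
  have hcm : Measurable c := ENNReal.measurable_ofReal.comp (by fun_prop)
  set K : ℝ × ℝ → ℝ≥0∞ :=
    fun p => Set.indicator {q : ℝ × ℝ | q.2 ∈ Ioc 0 q.1} (fun q => c q.1 * F q.2) p with hK
  have hsetm : MeasurableSet {q : ℝ × ℝ | q.2 ∈ Ioc 0 q.1} := by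
    have : {q : ℝ × ℝ | q.2 ∈ Ioc 0 q.1}
        = {q : ℝ × ℝ | 0 < q.2} ∩ {q : ℝ × ℝ | q.2 ≤ q.1} := by
      ext q
      simp only [mem_setOf_eq, mem_Ioc, mem_inter_iff]
    rw [this]
    exact (measurableSet_lt measurable_const measurable_snd).inter
      (measurableSet_le measurable_snd measurable_fst)
  have hKm : Measurable K :=
    ((hcm.comp measurable_fst).mul (hFm.comp measurable_snd)).indicator hsetm
  -- step A: pointwise bound on S
  have hstepA : ∀ x ∈ S, (‖u x‖₊ : ℝ≥0∞) ^ (2:ℝ) * ENNReal.ofReal (x ^ (-(2:ℝ)))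
      ≤ ∫⁻ t, K (x, t) := by
    intro x hx
    have hx0 : 0 < x := hSsub hx
    have h1 : (fun t => K (x, t)) = (Ioc (0:ℝ) x).indicator (fun t => c x * F t) := by
      funext t
      by_cases h : t ∈ Ioc (0:ℝ) x
      · simp only [hK]
        rw [Set.indicator_of_mem (show ((x,t) : ℝ × ℝ) ∈ {q : ℝ × ℝ | q.2 ∈ Ioc 0 q.1} from h),
          Set.indicator_of_mem h]
      · simp only [hK]
        rw [Set.indicator_of_notMem
            (show ((x,t) : ℝ × ℝ) ∉ {q : ℝ × ℝ | q.2 ∈ Ioc 0 q.1} from h),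
          Set.indicator_of_notMem h]
    have h2 : ∫⁻ t, K (x, t) = c x * ∫⁻ t in Ioc (0:ℝ) x, F t := by
      rw [h1, lintegral_indicator measurableSet_Ioc,
        lintegral_const_mul' _ _ ENNReal.ofReal_ne_top]
    rw [h2]
    calc (‖u x‖₊ : ℝ≥0∞) ^ (2:ℝ) * ENNReal.ofReal (x ^ (-(2:ℝ)))
        ≤ (ENNReal.ofReal (2 * x ^ ((2:ℝ)⁻¹)) * ∫⁻ t in Ioc (0:ℝ) x, F t)
            * ENNReal.ofReal (x ^ (-(2:ℝ))) :=
          mul_le_mul_left (hkey x hx) _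
      _ = c x * ∫⁻ t in Ioc (0:ℝ) x, F t := by
          rw [mul_comm _ (ENNReal.ofReal (x ^ (-(2:ℝ)))), ← mul_assoc, hc,
            ← ENNReal.ofReal_mul (Real.rpow_nonneg hx0.le _)]
          congr 2
          rw [← mul_assoc, mul_comm (x ^ (-(2:ℝ))) 2, mul_assoc, ← Real.rpow_add hx0]
          norm_num
  -- step B: inner integral bound after swap
  have hstepB : ∀ t : ℝ, (∫⁻ x in S, K (x, t))
      ≤ S.indicator (fun t => F t * ENNReal.ofReal (4 * t ^ (-(2:ℝ)⁻¹))) t := by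
    intro t
    by_cases ht : t ∈ S
    · have ht0 : 0 < t := hSsub ht
      rw [Set.indicator_of_mem ht]
      have h1 : ∀ x : ℝ, K (x, t) = F t * (Ici t).indicator c x := by
        intro x
        by_cases h : t ≤ x
        · simp only [hK]
          rw [Set.indicator_of_mem
              (show ((x,t) : ℝ × ℝ) ∈ {q : ℝ × ℝ | q.2 ∈ Ioc 0 q.1} from ⟨ht0, h⟩),
            Set.indicator_of_mem (show x ∈ Ici t from h), mul_comm]
        · simp only [hK]
          rw [Set.indicator_of_notMem
              (show ((x,t) : ℝ × ℝ) ∉ {q : ℝ × ℝ | q.2 ∈ Ioc 0 q.1} from fun hm => h hm.2),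
            Set.indicator_of_notMem (by simpa using h), mul_zero]
      have hFne : F t ≠ ∞ := by
        rw [hF]
        exact ENNReal.mul_ne_top ENNReal.ofReal_ne_top
          (ENNReal.rpow_ne_top_of_nonneg (by norm_num) ENNReal.coe_ne_top)
      calc ∫⁻ x in S, K (x, t) = ∫⁻ x in S, F t * (Ici t).indicator c x := by
            exact lintegral_congr fun x => h1 x
        _ = F t * ∫⁻ x in S, (Ici t).indicator c x :=
            lintegral_const_mul' _ _ hFne
        _ ≤ F t * ∫⁻ x, (Ici t).indicator c x :=
            mul_le_mul_right (setLIntegral_le_lintegral _ _) _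
        _ = F t * ∫⁻ x in Ici t, c x := by rw [lintegral_indicator measurableSet_Ici]
        _ = F t * ∫⁻ x in Ioi t, c x := by
            rw [setLIntegral_congr (Ioi_ae_eq_Ici (μ := volume) (a := t))]
        _ = F t * ENNReal.ofReal (4 * t ^ (-(2:ℝ)⁻¹)) := by
            congr 1
            have hint : IntegrableOn (fun x : ℝ => 2 * x ^ (-(3:ℝ)/2)) (Ioi t) :=
              (integrableOn_Ioi_rpow_of_lt (by norm_num) ht0).const_mul 2
            rw [hc, ← ofReal_integral_eq_lintegral_ofReal hint ?_]
            · congr 1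
              rw [MeasureTheory.integral_const_mul, integral_Ioi_rpow_of_lt (by norm_num) ht0]
              norm_num
              rw [div_eq_mul_inv]
              ring
            · filter_upwards [ae_restrict_mem measurableSet_Ioi] with x hx
              have : (0:ℝ) < x := ht0.trans hx
              positivity
    · rw [Set.indicator_of_notMem ht]
      have : ∀ x ∈ S, K (x, t) = 0 := by
        intro x hx
        simp only [hK]
        refine Set.indicator_of_notMem ?_ _
        intro hmem
        exact ht (hIocS x hx hmem)
      rw [setLIntegral_congr_fun hSm this, lintegral_zero]
  -- assemble
  calc ∫⁻ x in S, (‖u x‖₊ : ℝ≥0∞) ^ (2:ℝ) * ENNReal.ofReal (x ^ (-(2:ℝ)))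
      ≤ ∫⁻ x in S, ∫⁻ t, K (x, t) := by
        refine lintegral_mono_ae ?_
        exact (ae_restrict_iff' hSm).2 (ae_of_all _ hstepA)
    _ = ∫⁻ t, ∫⁻ x in S, K (x, t) := by
        exact lintegral_lintegral_swap hKm.aemeasurable
    _ ≤ ∫⁻ t, S.indicator (fun t => F t * ENNReal.ofReal (4 * t ^ (-(2:ℝ)⁻¹))) t :=
        lintegral_mono hstepB
    _ = ∫⁻ t in S, F t * ENNReal.ofReal (4 * t ^ (-(2:ℝ)⁻¹)) := by
        rw [lintegral_indicator hSm]
    _ = ∫⁻ t in S, 4 * (‖v t‖₊ : ℝ≥0∞) ^ (2:ℝ) := by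
        refine setLIntegral_congr_fun hSm (fun t ht => ?_)
        have ht0 : 0 < t := hSsub ht
        simp only [hF]
        rw [mul_comm (ENNReal.ofReal (t ^ ((2:ℝ)⁻¹))), mul_assoc,
          ← ENNReal.ofReal_mul (Real.rpow_nonneg ht0.le _)]
        have : t ^ ((2:ℝ)⁻¹) * (4 * t ^ (-(2:ℝ)⁻¹)) = 4 := by
          rw [mul_comm (4:ℝ), ← mul_assoc, ← Real.rpow_add ht0]
          norm_num
        rw [this, mul_comm]
        norm_num
    _ = 4 * ∫⁻ t in S, (‖v t‖₊ : ℝ≥0∞) ^ (2:ℝ) :=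
        lintegral_const_mul' _ _ (by norm_num)

end StmtAux

/-- Let `ν ∈ (0,1)`, let `b ∈ (0,∞]` (the set `S` is `(0,b)` for finite `b > 0` or the
half-line `(0,∞)`), and let `u(x) = ∫₀ˣ u'(t) dt` with `u' ∈ L²(0,b)`. Then the Bessel
quadratic form `𝔰_ν[u] = ∫₀ᵇ |u'|² + (ν²−1/4)∫₀ᵇ |u|²/x²` (which is finite) satisfies
`min{4ν²,1}·∫₀ᵇ|u'|² ≤ 𝔰_ν[u] ≤ (1 + |4ν²−1|)·∫₀ᵇ|u'|²`: the energy norm is equivalent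
to the `H¹`-seminorm on functions vanishing at `0`. -/
theorem stmt5 (ν : ℝ) (hν : ν ∈ Ioo (0:ℝ) 1)
    (S : Set ℝ) (hS : S = Ioi (0:ℝ) ∨ ∃ b : ℝ, 0 < b ∧ S = Ioo 0 b)
    (u u' : ℝ → ℂ) (hu' : MemLp u' 2 (volume.restrict S))
    (hu : ∀ x ∈ S, u x = ∫ t in (0:ℝ)..x, u' t) :
    IntegrableOn (fun x => ‖u x‖ ^ 2 / x ^ 2) S ∧
    min (4 * ν ^ 2) 1 * (∫ x in S, ‖u' x‖ ^ 2)
      ≤ (∫ x in S, ‖u' x‖ ^ 2) + (ν ^ 2 - 1/4) * ∫ x in S, ‖u x‖ ^ 2 / x ^ 2 ∧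
    (∫ x in S, ‖u' x‖ ^ 2) + (ν ^ 2 - 1/4) * ∫ x in S, ‖u x‖ ^ 2 / x ^ 2
      ≤ (1 + |4 * ν ^ 2 - 1|) * ∫ x in S, ‖u' x‖ ^ 2 := by
  have hSm : MeasurableSet S := by
    rcases hS with h | ⟨b, hb, h⟩ <;> subst h
    exacts [measurableSet_Ioi, measurableSet_Ioo]
  have hSsub : S ⊆ Ioi (0:ℝ) := by
    rcases hS with h | ⟨b, hb, h⟩ <;> subst h
    exacts [subset_rfl, fun x hx => hx.1]
  have hIocS : ∀ x ∈ S, Ioc (0:ℝ) x ⊆ S := by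
    rcases hS with h | ⟨b, hb, h⟩ <;> subst h
    · exact fun x hx t ht => ht.1
    · exact fun x hx t ht => ⟨ht.1, lt_of_le_of_lt ht.2 hx.2⟩
  obtain ⟨v, hvm, hv_ae⟩ := hu'.1
  have hv2 : MemLp v 2 (volume.restrict S) := hu'.ae_eq hv_ae
  -- u x as set integral of v
  have hux : ∀ x ∈ S, u x = ∫ t in Ioc (0:ℝ) x, v t := by
    intro x hx
    have hx0 : 0 < x := hSsub hx
    rw [hu x hx, intervalIntegral.integral_of_le hx0.le]
    exact integral_congr_ae (ae_restrict_of_ae_restrict_of_subset (hIocS x hx) hv_ae)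
  -- measurable primitive
  have hvInt : ∀ t : Set ℝ, MeasurableSet t → volume t < ⊤ → IntegrableOn v (t ∩ S) := by
    intro t htm htf
    have h1 : MemLp v 2 ((volume.restrict S).restrict t) := hv2.restrict t
    rw [Measure.restrict_restrict htm] at h1
    haveI : IsFiniteMeasure (volume.restrict (t ∩ S)) := by
      constructor
      rw [Measure.restrict_apply_univ]
      exact lt_of_le_of_lt (measure_mono inter_subset_left) htf
    exact h1.integrable one_le_two
  set g : ℝ → ℂ := S.indicator v with hg
  have hgInt : ∀ a b : ℝ, IntervalIntegrable g volume a b := by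
    intro a b
    rw [intervalIntegrable_iff, IntegrableOn, integrable_indicator_iff hSm,
      IntegrableOn, Measure.restrict_restrict hSm, inter_comm]
    exact hvInt _ measurableSet_uIoc measure_Ioc_lt_top
  set G : ℝ → ℂ := fun x => ∫ t in (0:ℝ)..x, g t with hG
  have hGcont : Continuous G := intervalIntegral.continuous_primitive hgInt 0
  have huG : ∀ x ∈ S, u x = G x := by
    intro x hx
    have hx0 : 0 < x := hSsub hx
    rw [hux x hx, hG]
    simp only
    rw [intervalIntegral.integral_of_le hx0.le]
    exact setIntegral_congr_fun measurableSet_Ioc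
      (fun t ht => (indicator_of_mem (hIocS x hx ht) v).symm)
  -- I and its finiteness
  set I : ENNReal := ∫⁻ t in S, (‖v t‖₊ : ENNReal) ^ (2:ℝ) with hI
  have hvnr : Integrable (fun t => ‖v t‖ ^ (2:ℝ)) (volume.restrict S) := by
    have := hv2.integrable_norm_rpow (by norm_num) (by norm_num)
    simpa using this
  have hofReal : ∀ t : ℝ, ENNReal.ofReal (‖v t‖ ^ (2:ℝ)) = (‖v t‖₊ : ENNReal) ^ (2:ℝ) := by
    intro t
    rw [← ENNReal.ofReal_coe_nnreal, coe_nnnorm, ENNReal.ofReal_rpow_of_nonneg (norm_nonneg _) (by norm_num)]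
  have hIfin : I < ⊤ := by
    have h1 := hvnr.2
    rw [hasFiniteIntegral_iff_ofReal (ae_of_all _ fun t => Real.rpow_nonneg (norm_nonneg _) _)] at h1
    rw [hI]
    calc ∫⁻ t in S, (‖v t‖₊ : ENNReal) ^ (2:ℝ)
        = ∫⁻ t in S, ENNReal.ofReal (‖v t‖ ^ (2:ℝ)) := by
          exact lintegral_congr fun t => (hofReal t).symm
      _ < ⊤ := h1
  -- A = I.toReal
  have hAv : ∫ x in S, ‖u' x‖ ^ 2 = ∫ x in S, ‖v x‖ ^ 2 :=
    integral_congr_ae (hv_ae.mono fun x hx => by simp only [hx])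
  have hrpow_pow : ∀ w : ℂ, ‖w‖ ^ (2:ℝ) = ‖w‖ ^ 2 := fun w => by
    rw [show (2:ℝ) = ((2:ℕ):ℝ) by norm_num, Real.rpow_natCast]
  have hAI : ∫ x in S, ‖v x‖ ^ 2 = I.toReal := by
    rw [integral_eq_lintegral_of_nonneg_ae (ae_of_all _ fun x => by positivity)
      ((hvm.measurable.norm.pow_const 2).aestronglyMeasurable)]
    congr 1
    refine lintegral_congr fun t => ?_
    rw [← hrpow_pow, hofReal]
  -- J and Hardy
  set J : ENNReal := ∫⁻ x in S, (‖u x‖₊ : ENNReal) ^ (2:ℝ) * ENNReal.ofReal (x ^ (-(2:ℝ))) with hJ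
  have hkey : ∀ x ∈ S, (‖u x‖₊ : ENNReal) ^ (2:ℝ) ≤
      ENNReal.ofReal (2 * x ^ ((2:ℝ)⁻¹)) *
        ∫⁻ t in Ioc (0:ℝ) x, ENNReal.ofReal (t ^ ((2:ℝ)⁻¹)) * (‖v t‖₊ : ENNReal) ^ (2:ℝ) := by
    intro x hx
    rw [hux x hx]
    exact stmt5_step1 x (hSsub hx) v hvm
  have hJ4I : J ≤ 4 * I := stmt5_hardy S hSm hSsub hIocS v hvm u hkey
  have hJfin : J < ⊤ := lt_of_le_of_lt hJ4I (ENNReal.mul_lt_top (by norm_num) hIfin)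
  -- the integrand φ
  set φ : ℝ → ℝ := fun x => ‖u x‖ ^ 2 / x ^ 2 with hφ
  have hφ0 : ∀ x, 0 ≤ φ x := fun x => by positivity
  have hψm : Measurable fun x : ℝ => ‖G x‖ ^ 2 / x ^ 2 :=
    (hGcont.measurable.norm.pow_const 2).div (measurable_id.pow_const 2)
  have hφae : φ =ᵐ[volume.restrict S] fun x => ‖G x‖ ^ 2 / x ^ 2 := by
    refine (ae_restrict_iff' hSm).2 (ae_of_all _ fun x hx => ?_)
    simp only [hφ]
    rw [huG x hx]
  have hφm : AEStronglyMeasurable φ (volume.restrict S) :=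
    (hψm.aestronglyMeasurable).congr hφae.symm
  have hφofReal : ∀ x ∈ S, ENNReal.ofReal (φ x)
      = (‖u x‖₊ : ENNReal) ^ (2:ℝ) * ENNReal.ofReal (x ^ (-(2:ℝ))) := by
    intro x hx
    have hx0 : 0 < x := hSsub hx
    have hx2 : x ^ (-(2:ℝ)) = (x ^ 2)⁻¹ := by
      rw [Real.rpow_neg hx0.le, show ((2:ℝ)) = ((2:ℕ):ℝ) by norm_num, Real.rpow_natCast]
    have : φ x = ‖u x‖ ^ 2 * x ^ (-(2:ℝ)) := by
      simp only [hφ]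
      rw [div_eq_mul_inv, hx2]
    rw [this, ENNReal.ofReal_mul (by positivity)]
    congr 1
    rw [← hrpow_pow, ← ENNReal.ofReal_coe_nnreal, coe_nnnorm,
      ENNReal.ofReal_rpow_of_nonneg (norm_nonneg _) (by norm_num)]
  have hφJ : ∫⁻ x in S, ENNReal.ofReal (φ x) = J :=
    setLIntegral_congr_fun hSm hφofReal
  have hφint : IntegrableOn φ S := by
    refine ⟨hφm, ?_⟩
    rw [hasFiniteIntegral_iff_ofReal (ae_of_all _ hφ0), hφJ]
    exact hJfin
  have hB : ∫ x in S, φ x = J.toReal := by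
    rw [integral_eq_lintegral_of_nonneg_ae (ae_of_all _ hφ0) hφm, hφJ]
  -- assemble real inequalities
  have hA' : ∫ x in S, ‖u' x‖ ^ 2 = I.toReal := hAv.trans hAI
  have hAnn : 0 ≤ ∫ x in S, ‖u' x‖ ^ 2 := integral_nonneg fun x => by positivity
  have hBnn : 0 ≤ ∫ x in S, φ x := integral_nonneg hφ0
  have hBA : ∫ x in S, φ x ≤ 4 * ∫ x in S, ‖u' x‖ ^ 2 := by
    rw [hB, hA']
    calc J.toReal ≤ (4 * I).toReal :=
          ENNReal.toReal_mono (ENNReal.mul_lt_top (by norm_num) hIfin).ne hJ4I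
      _ = 4 * I.toReal := by
          rw [ENNReal.toReal_mul]
          norm_num
  refine ⟨hφint, ?_, ?_⟩
  · set A := ∫ x in S, ‖u' x‖ ^ 2
    set B := ∫ x in S, φ x
    rcases le_or_gt (ν ^ 2) (1/4) with h | h
    · have hmin : min (4 * ν ^ 2) 1 = 4 * ν ^ 2 := min_eq_left (by nlinarith)
      have h2 : (ν ^ 2 - 1/4) * (4 * A) ≤ (ν ^ 2 - 1/4) * B :=
        mul_le_mul_of_nonpos_left hBA (by linarith)
      rw [hmin]
      nlinarith
    · have hmin : min (4 * ν ^ 2) 1 ≤ 1 := min_le_right _ _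
      have h2 := mul_le_mul_of_nonneg_right hmin hAnn
      have h3 : 0 ≤ (ν ^ 2 - 1/4) * B := mul_nonneg (by linarith) hBnn
      nlinarith
  · set A := ∫ x in S, ‖u' x‖ ^ 2
    set B := ∫ x in S, φ x
    rcases le_or_gt (ν ^ 2) (1/4) with h | h
    · have h2 : (ν ^ 2 - 1/4) * B ≤ 0 := mul_nonpos_of_nonpos_of_nonneg (by linarith) hBnn
      have h3 : 0 ≤ |4 * ν ^ 2 - 1| * A := mul_nonneg (abs_nonneg _) hAnn
      nlinarith
    · have habs : |4 * ν ^ 2 - 1| = 4 * ν ^ 2 - 1 := abs_of_pos (by nlinarith)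
      have h2 : (ν ^ 2 - 1/4) * B ≤ (ν ^ 2 - 1/4) * (4 * A) :=
        mul_le_mul_of_nonneg_left hBA (by linarith)
      rw [habs]
      nlinarith
end

section
/- Let ν ∈ (0,1) and s > 0, and define f_μ(x) := x^{1/2} J_μ(xs) for μ ∈ {ν, −ν}, where J_μ(w) := (w/2)^μ · Σ_{k=0}^∞ (−w²/4)^k / (k! Γ(μ+k+1)) for w > 0. Then the following boundary limits hold as x → 0⁺: (a) [f_ν, x^{1/2+ν}]_x → 0; (b) [f_{−ν}, x^{1/2+ν}]_x → −2^{1+ν} s^{−ν} / Γ(−ν); (c) [f_ν, x^{1/2−ν}]_x → −s^{ν} / (2^{ν−1} Γ(ν)); (d) [f_{−ν}, x^{1/2−ν}]_x → 0. Here Γ is the real Gamma function (note Γ(−ν) is finite and nonzero for ν ∈ (0,1)). -/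
open MeasureTheory Set Filter

/-- The Bessel function of the first kind of order `μ`, defined for `w > 0` by the
convergent series `J_μ(w) = (w/2)^μ Σ_{k≥0} (−w²/4)^k / (k! Γ(μ+k+1))`. -/
noncomputable def besselJ (μ : ℝ) (w : ℝ) : ℝ :=
  (w / 2) ^ μ * ∑' k : ℕ, (-(w ^ 2) / 4) ^ k / ((k.factorial : ℝ) * Real.Gamma (μ + k + 1))

/-- Wronskian-type bracket `[f, φ]_x = f(x)φ'(x) − f'(x)φ(x)` for real functions. -/
noncomputable def wBracketR (f φ : ℝ → ℝ) (x : ℝ) : ℝ :=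
  f x * deriv φ x - deriv f x * φ x

lemma summmain (c μ : ℝ) (hc : 0 ≤ c) (hμ : -1 < μ) :
    Summable (fun k : ℕ => ((k:ℝ)+1)^3 * c^k / (k.factorial * Real.Gamma (μ+k+1))) := by
  apply summable_of_ratio_norm_eventually_le (r := 1/2) (by norm_num)
  obtain ⟨N, hN16⟩ := exists_nat_ge (16*c)
  filter_upwards [eventually_ge_atTop (N+1)] with k hk
  have hkc : (16:ℝ)*c ≤ k := by
    have : ((N:ℝ)) ≤ k := by exact_mod_cast (by omega : N ≤ k)
    linarith
  have hknn : (0:ℝ) ≤ k := k.cast_nonneg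
  have hrec : Real.Gamma (μ+(k+1:ℕ)+1) = (μ+k+1) * Real.Gamma (μ+k+1) := by
    have := Real.Gamma_add_one (s := μ+k+1) (by linarith)
    push_cast
    rw [show μ+((k:ℝ)+1)+1 = (μ+k+1)+1 by ring, this]
  have hfactpos : (0:ℝ) < k.factorial := by exact_mod_cast k.factorial_pos
  have hck : (0:ℝ) ≤ c^k := pow_nonneg hc k
  have hΓ : 0 < Real.Gamma (μ+k+1) := Real.Gamma_pos_of_pos (by linarith)
  have hμk : (0:ℝ) < μ+k+1 := by linarith
  have hfs : ((k+1:ℕ).factorial : ℝ) = (k+1) * k.factorial := by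
    push_cast [Nat.factorial_succ]; ring
  rw [Real.norm_eq_abs, Real.norm_eq_abs, hrec, hfs]
  push_cast
  have hden1 : (0:ℝ) < ((k:ℝ)+1) * k.factorial * ((μ+k+1) * Real.Gamma (μ+k+1)) := by
    apply mul_pos (mul_pos (by positivity) hfactpos) (mul_pos hμk hΓ)
  have hden2 : (0:ℝ) < (k.factorial:ℝ) * Real.Gamma (μ+k+1) := mul_pos hfactpos hΓ
  rw [abs_of_nonneg (div_nonneg (by positivity) hden1.le),
      abs_of_nonneg (div_nonneg (by positivity) hden2.le),
      ← mul_div_assoc, div_le_div_iff₀ hden1 hden2]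
  have h1 : ((k:ℝ)+1+1)^3 ≤ 8 * ((k:ℝ)+1)^3 := by
    have := pow_le_pow_left₀ (show (0:ℝ) ≤ (k:ℝ)+1+1 by linarith)
      (show (k:ℝ)+1+1 ≤ 2*((k:ℝ)+1) by linarith) 3
    calc ((k:ℝ)+1+1)^3 ≤ (2*((k:ℝ)+1))^3 := this
      _ = 8 * ((k:ℝ)+1)^3 := by ring
  have h2 : (16:ℝ) * c ≤ ((k:ℝ)+1) * (μ+k+1) := by nlinarith
  calc ((k:ℝ)+1+1)^3 * c^(k+1) * ((k.factorial:ℝ) * Real.Gamma (μ+k+1))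
      ≤ 8*((k:ℝ)+1)^3 * c^(k+1) * ((k.factorial:ℝ) * Real.Gamma (μ+k+1)) := by
        apply mul_le_mul_of_nonneg_right (mul_le_mul_of_nonneg_right h1 (pow_nonneg hc _)) hden2.le
    _ = (1/2 * (((k:ℝ)+1)^3 * c^k) * ((k.factorial:ℝ) * Real.Gamma (μ+k+1))) * (16*c) := by
        rw [pow_succ]; ring
    _ ≤ (1/2 * (((k:ℝ)+1)^3 * c^k) * ((k.factorial:ℝ) * Real.Gamma (μ+k+1))) * (((k:ℝ)+1) * (μ+k+1)) := by
        apply mul_le_mul_of_nonneg_left h2 (by positivity)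
    _ = 1/2 * (((k:ℝ)+1)^3 * c^k) * (((k:ℝ)+1) * k.factorial * ((μ+k+1) * Real.Gamma (μ+k+1))) := by
        ring


noncomputable def bCoef (μ s : ℝ) (k : ℕ) : ℝ :=
  (-(s^2)/4)^k / (k.factorial * Real.Gamma (μ+k+1))
noncomputable def bH (μ s : ℝ) (t : ℝ) : ℝ := ∑' k, bCoef μ s k * t^k
noncomputable def bD (μ s : ℝ) (t : ℝ) : ℝ := ∑' k, bCoef μ s k * (k * t^(k-1))
noncomputable def uB (μ s : ℝ) (k : ℕ) : ℝ :=
  ((k:ℝ)+1)^3 * (s^2/2)^k / (k.factorial * Real.Gamma (μ+k+1))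

section
variable {μ s : ℝ} (hμ : -1 < μ) (hs : 0 < s)
include hμ hs

omit hs in

lemma gammapos (k : ℕ) : 0 < (k.factorial : ℝ) * Real.Gamma (μ+k+1) := by
  have hΓ : 0 < Real.Gamma (μ+k+1) :=
    Real.Gamma_pos_of_pos (by have := k.cast_nonneg (α := ℝ); linarith)
  have hf : (0:ℝ) < k.factorial := by exact_mod_cast k.factorial_pos
  exact mul_pos hf hΓ

omit hs in
lemma bCoef_abs (k : ℕ) : |bCoef μ s k| = (s^2/4)^k / (k.factorial * Real.Gamma (μ+k+1)) := by
  rw [bCoef, abs_div, abs_of_pos (gammapos hμ k), abs_pow, abs_div]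
  norm_num [abs_of_nonneg (sq_nonneg s)]

omit hs in
lemma u_summable : Summable (uB μ s) := summmain _ _ (by positivity) hμ

omit hs in
lemma bound_est (k j : ℕ) (m : ℝ) (hm : 0 ≤ m) (hmk : m * 2^j ≤ ((k:ℝ)+1)^3 * 2^k) {t : ℝ}
    (ht : |t| ≤ 2) : ‖bCoef μ s k * (m * t^j)‖ ≤ uB μ s k := by
  have hpos := gammapos hμ k
  rw [Real.norm_eq_abs, abs_mul, abs_mul, abs_pow, bCoef_abs hμ, abs_of_nonneg hm]
  have h1 : |t|^j ≤ 2^j := pow_le_pow_left₀ (abs_nonneg t) ht j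
  have h2 : m * |t|^j ≤ ((k:ℝ)+1)^3 * 2^k :=
    le_trans (mul_le_mul_of_nonneg_left h1 hm) hmk
  calc (s^2/4)^k / (k.factorial * Real.Gamma (μ+k+1)) * (m * |t|^j)
      ≤ (s^2/4)^k / (k.factorial * Real.Gamma (μ+k+1)) * (((k:ℝ)+1)^3 * 2^k) :=
        mul_le_mul_of_nonneg_left h2 (by positivity)
    _ = uB μ s k := by
        rw [uB, show (s^2/2 : ℝ) = s^2/4 * 2 by ring, mul_pow]
        field_simp

omit hs in
lemma hasDerivAt_bH {t : ℝ} (ht : t ∈ Ioo (-2:ℝ) 2) :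
    HasDerivAt (bH μ s) (bD μ s t) t := by
  unfold bH bD
  refine hasDerivAt_tsum_of_isPreconnected (u_summable (s := s) hμ) isOpen_Ioo isPreconnected_Ioo
    (g' := fun k t => bCoef μ s k * ((k:ℝ) * t^(k-1)))
    (fun k y _ => (hasDerivAt_pow k y).const_mul _) (fun k y hy => ?_)
    (show (0:ℝ) ∈ Ioo (-2:ℝ) 2 by norm_num) ?_ ht
  · 
    apply bound_est hμ k (k-1) k (k.cast_nonneg)
    · have h2 : (2:ℝ)^(k-1) ≤ 2^k := pow_le_pow_right₀ (by norm_num) (Nat.sub_le k 1)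
      have h3 : (k:ℝ) ≤ ((k:ℝ)+1)^3 := by nlinarith [k.cast_nonneg (α := ℝ), sq_nonneg ((k:ℝ)), pow_nonneg (k.cast_nonneg (α := ℝ)) 3]
      calc (k:ℝ) * 2^(k-1) ≤ (k:ℝ) * 2^k := by
            exact mul_le_mul_of_nonneg_left h2 k.cast_nonneg
        _ ≤ ((k:ℝ)+1)^3 * 2^k := mul_le_mul_of_nonneg_right h3 (by positivity)
    · rw [abs_le]; constructor <;> [linarith [hy.1]; linarith [hy.2]]
  · refine summable_of_ne_finset_zero (s := Finset.range 2) fun k hk => ?_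
    have h2 : 2 ≤ k := Nat.not_lt.mp (by simpa using hk)
    have : k ≠ 0 := by omega
    simp [zero_pow this]

omit hs in
lemma hasDerivAt_bD {t : ℝ} (ht : t ∈ Ioo (-2:ℝ) 2) :
    HasDerivAt (bD μ s) (∑' k, bCoef μ s k * ((k:ℝ) * ((k-1:ℕ) * t^(k-1-1)))) t := by
  refine hasDerivAt_tsum_of_isPreconnected (u_summable (s := s) hμ) isOpen_Ioo isPreconnected_Ioo
    (g' := fun k t => bCoef μ s k * ((k:ℝ) * (((k-1:ℕ):ℝ) * t^(k-1-1))))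
    (fun k y _ => by simpa [mul_assoc] using ((hasDerivAt_pow (k-1) y).const_mul (bCoef μ s k * k)))
    (fun k y hy => ?_)
    (show (0:ℝ) ∈ Ioo (-2:ℝ) 2 by norm_num) ?_ ht
  · 
    have habs : |y| ≤ 2 := by rw [abs_le]; constructor <;> [linarith [hy.1]; linarith [hy.2]]
    have := bound_est (s := s) hμ k (k-1-1) ((k:ℝ) * ((k-1:ℕ):ℝ))
      (by positivity) ?_ habs
    · simpa [mul_assoc] using this
    · have h2 : (2:ℝ)^(k-1-1) ≤ 2^k := pow_le_pow_right₀ (by norm_num) (by omega)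
      have h3 : (k:ℝ) * ((k-1:ℕ):ℝ) ≤ ((k:ℝ)+1)^3 := by
        have h4 : ((k-1:ℕ):ℝ) ≤ k := by exact_mod_cast Nat.sub_le k 1
        nlinarith [k.cast_nonneg (α := ℝ), Nat.cast_nonneg (α := ℝ) (k-1),
          mul_le_mul_of_nonneg_left h4 (k.cast_nonneg (α := ℝ))]
      calc (k:ℝ) * ((k-1:ℕ):ℝ) * 2^(k-1-1) ≤ (k:ℝ) * ((k-1:ℕ):ℝ) * 2^k :=
            mul_le_mul_of_nonneg_left h2 (by positivity)
        _ ≤ ((k:ℝ)+1)^3 * 2^k := mul_le_mul_of_nonneg_right h3 (by positivity)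
  · refine summable_of_ne_finset_zero (s := Finset.range 2) fun k hk => ?_
    have hk2 : 2 ≤ k := Nat.not_lt.mp (by simpa using hk)
    simp [zero_pow (by omega : k - 1 ≠ 0)]

omit hμ hs in
lemma bH_zero : bH μ s 0 = 1 / Real.Gamma (μ+1) := by
  rw [bH, tsum_eq_single 0 (by intro k hk; simp [zero_pow hk])]
  simp [bCoef]


lemma besselJ_eq {x : ℝ} (hx : 0 < x) :
    besselJ μ (x*s) = (s/2)^μ * x^μ * bH μ s (x^2) := by
  rw [besselJ, bH]
  have h1 : (x*s/2 : ℝ) = x * (s/2) := by ring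
  rw [h1, Real.mul_rpow hx.le (by positivity)]
  have h2 : ∀ k : ℕ, (-((x*s)^2)/4)^k / ((k.factorial:ℝ) * Real.Gamma (μ+k+1))
      = bCoef μ s k * (x^2)^k := by
    intro k
    rw [bCoef, show (-((x*s)^2)/4 : ℝ) = (-(s^2)/4) * x^2 by ring, mul_pow]
    ring
  rw [tsum_congr h2]
  ring

lemma f_hasDerivAt {x : ℝ} (hx : x ∈ Ioo (0:ℝ) 1) :
    HasDerivAt (fun y => y^((1:ℝ)/2) * besselJ μ (y*s))
      ((s/2)^μ * (((1/2+μ) * x^((1:ℝ)/2+μ-1)) * bH μ s (x^2)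
        + x^((1:ℝ)/2+μ) * (bD μ s (x^2) * (2*x)))) x := by
  have hx2 : x^2 ∈ Ioo (-2:ℝ) 2 := by
    constructor <;> nlinarith [hx.1, hx.2]
  have hsq : HasDerivAt (fun y : ℝ => y^2) (2*x) x := by
    have := hasDerivAt_pow 2 x
    norm_num at this
    exact this
  have hcomp : HasDerivAt (fun y : ℝ => bH μ s (y^2)) (bD μ s (x^2) * (2*x)) x :=
    HasDerivAt.comp (h := fun y : ℝ => y^2) (h₂ := bH μ s) x (hasDerivAt_bH hμ hx2) hsq
  have hg : HasDerivAt (fun y => (s/2)^μ * (y^((1:ℝ)/2+μ) * bH μ s (y^2)))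
      ((s/2)^μ * (((1/2+μ) * x^((1:ℝ)/2+μ-1)) * bH μ s (x^2)
        + x^((1:ℝ)/2+μ) * (bD μ s (x^2) * (2*x)))) x := by
    exact ((Real.hasDerivAt_rpow_const (p := (1:ℝ)/2+μ) (Or.inl hx.1.ne')).mul
      hcomp).const_mul _
  apply hg.congr_of_eventuallyEq
  filter_upwards [isOpen_Ioi.mem_nhds (mem_Ioi.mpr hx.1)] with y hy
  rw [besselJ_eq hμ hs hy, show ((1:ℝ)/2+μ) = 1/2 + μ by ring, Real.rpow_add hy]
  ring

lemma f_val {x : ℝ} (hx : 0 < x) :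
    x^((1:ℝ)/2) * besselJ μ (x*s) = (s/2)^μ * (x^((1:ℝ)/2+μ) * bH μ s (x^2)) := by
  rw [besselJ_eq hμ hs hx, Real.rpow_add hx]
  ring

lemma bracket_eq (β : ℝ) {x : ℝ} (hx : x ∈ Ioo (0:ℝ) 1) :
    wBracketR (fun y => y^((1:ℝ)/2) * besselJ μ (y*s)) (fun y => y^((1:ℝ)/2+β)) x
      = (s/2)^μ * ((β-μ) * x^(μ+β) * bH μ s (x^2) - 2 * x^(μ+β+2) * bD μ s (x^2)) := by
  have hx0 := hx.1
  rw [wBracketR, (f_hasDerivAt hμ hs hx).deriv,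
    Real.deriv_rpow_const x, f_val hμ hs hx0]
  have e : ∀ a b : ℝ, x^a * x^b = x^(a+b) := fun a b => (Real.rpow_add hx0 a b).symm
  have e1 : x^((1:ℝ)/2+μ) * x^((1:ℝ)/2+β-1) = x^(μ+β) := by rw [e]; congr 1; ring
  have e2 : x^((1:ℝ)/2+μ-1) * x^((1:ℝ)/2+β) = x^(μ+β) := by rw [e]; congr 1; ring
  have e3 : x^((1:ℝ)/2+μ) * x * x^((1:ℝ)/2+β) = x^(μ+β+2) := by
    rw [mul_assoc, show (x : ℝ) * x^((1:ℝ)/2+β) = x^(1:ℝ) * x^((1:ℝ)/2+β) by rw [Real.rpow_one],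
      e, e]
    congr 1; ring
  set H := bH μ s (x^2)
  set D := bD μ s (x^2)
  linear_combination ((s/2)^μ * (1/2+β) * H) * e1 - ((s/2)^μ * (1/2+μ) * H) * e2
    - (2 * (s/2)^μ * D) * e3

omit hμ hs in
lemma tendsto_rpow0 {p : ℝ} (hp : 0 < p) :
    Tendsto (fun x : ℝ => x^p) (nhdsWithin 0 (Ioi 0)) (nhds 0) := by
  have h : ContinuousAt (fun x : ℝ => x^p) 0 :=
    Real.continuousAt_rpow_const 0 p (Or.inr hp.le)
  have h0 : (0:ℝ)^p = 0 := Real.zero_rpow hp.ne'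
  have := h.tendsto
  rw [h0] at this
  exact this.mono_left nhdsWithin_le_nhds

omit hs in
lemma tendsto_bH_sq : Tendsto (fun x : ℝ => bH μ s (x^2)) (nhdsWithin 0 (Ioi 0))
    (nhds (bH μ s 0)) := by
  have hf : ContinuousAt (fun x : ℝ => x^2) 0 := (continuous_pow 2).continuousAt
  have hg : ContinuousAt (bH μ s) ((fun x : ℝ => x^2) 0) := by
    rw [show (fun x : ℝ => x^2) 0 = 0 by norm_num]
    exact (hasDerivAt_bH hμ (s := s) (by norm_num : (0:ℝ) ∈ Ioo (-2:ℝ) 2)).continuousAt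
  have := (ContinuousAt.comp (g := bH μ s) (f := fun x : ℝ => x^2) (x := (0:ℝ)) hg hf).tendsto
  norm_num at this
  exact this.mono_left nhdsWithin_le_nhds

omit hs in
lemma tendsto_bD_sq : Tendsto (fun x : ℝ => bD μ s (x^2)) (nhdsWithin 0 (Ioi 0))
    (nhds (bD μ s 0)) := by
  have hf : ContinuousAt (fun x : ℝ => x^2) 0 := (continuous_pow 2).continuousAt
  have hg : ContinuousAt (bD μ s) ((fun x : ℝ => x^2) 0) := by
    rw [show (fun x : ℝ => x^2) 0 = 0 by norm_num]
    exact (hasDerivAt_bD hμ (s := s) (by norm_num : (0:ℝ) ∈ Ioo (-2:ℝ) 2)).continuousAt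
  have := (ContinuousAt.comp (g := bD μ s) (f := fun x : ℝ => x^2) (x := (0:ℝ)) hg hf).tendsto
  norm_num at this
  exact this.mono_left nhdsWithin_le_nhds

lemma tendsto_same :
    Tendsto (fun x => wBracketR (fun y => y^((1:ℝ)/2) * besselJ μ (y*s))
      (fun y => y^((1:ℝ)/2+μ)) x) (nhdsWithin 0 (Ioi 0)) (nhds 0) := by
  have heq : ∀ᶠ x in nhdsWithin 0 (Ioi (0:ℝ)),
      wBracketR (fun y => y^((1:ℝ)/2) * besselJ μ (y*s)) (fun y => y^((1:ℝ)/2+μ)) x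
        = (s/2)^μ * (0 - 2 * x^(μ+μ+2) * bD μ s (x^2)) := by
    filter_upwards [Ioo_mem_nhdsGT_of_mem (by norm_num : (0:ℝ) ∈ Ico (0:ℝ) 1)] with x hx
    rw [bracket_eq hμ hs μ hx]
    ring
  have hp : 0 < μ + μ + 2 := by linarith
  have hB : Tendsto (fun x : ℝ => 2 * x^(μ+μ+2) * bD μ s (x^2))
      (nhdsWithin 0 (Ioi (0:ℝ))) (nhds (2 * 0 * bD μ s 0)) :=
    (Tendsto.const_mul 2 (tendsto_rpow0 hp)).mul (tendsto_bD_sq hμ)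
  have hT : Tendsto (fun x : ℝ => (s/2)^μ * (0 - 2 * x^(μ+μ+2) * bD μ s (x^2)))
      (nhdsWithin 0 (Ioi (0:ℝ))) (nhds ((s/2)^μ * (0 - 2 * 0 * bD μ s 0))) :=
    Tendsto.const_mul _ (tendsto_const_nhds.sub hB)
  have hz : ((s/2:ℝ)^μ * (0 - 2 * 0 * bD μ s 0)) = 0 := by ring
  rw [hz] at hT
  exact Tendsto.congr' (Filter.EventuallyEq.symm heq) hT

lemma tendsto_mixed (β : ℝ) (hsum : μ + β = 0) :
    Tendsto (fun x => wBracketR (fun y => y^((1:ℝ)/2) * besselJ μ (y*s))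
      (fun y => y^((1:ℝ)/2+β)) x) (nhdsWithin 0 (Ioi 0))
      (nhds ((s/2)^μ * ((β-μ) * (1/Real.Gamma (μ+1))))) := by
  have heq : ∀ᶠ x in nhdsWithin 0 (Ioi (0:ℝ)),
      wBracketR (fun y => y^((1:ℝ)/2) * besselJ μ (y*s)) (fun y => y^((1:ℝ)/2+β)) x
        = (s/2)^μ * ((β-μ) * bH μ s (x^2) - 2 * x^((2:ℝ)) * bD μ s (x^2)) := by
    filter_upwards [Ioo_mem_nhdsGT_of_mem (by norm_num : (0:ℝ) ∈ Ico (0:ℝ) 1)] with x hx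
    rw [bracket_eq hμ hs β hx, hsum, Real.rpow_zero, show (0:ℝ)+2 = 2 by norm_num]
    ring
  have hB : Tendsto (fun x : ℝ => 2 * x^((2:ℝ)) * bD μ s (x^2))
      (nhdsWithin 0 (Ioi (0:ℝ))) (nhds (2 * 0 * bD μ s 0)) :=
    (Tendsto.const_mul 2 (tendsto_rpow0 two_pos)).mul (tendsto_bD_sq hμ)
  have hA : Tendsto (fun x : ℝ => (β-μ) * bH μ s (x^2))
      (nhdsWithin 0 (Ioi (0:ℝ))) (nhds ((β-μ) * bH μ s 0)) :=
    Tendsto.const_mul _ (tendsto_bH_sq hμ)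
  have hT := Tendsto.const_mul ((s/2:ℝ)^μ) (hA.sub hB)
  have hz : ((s/2:ℝ)^μ * ((β-μ) * bH μ s 0 - 2 * 0 * bD μ s 0))
      = (s/2)^μ * ((β-μ) * (1/Real.Gamma (μ+1))) := by
    rw [bH_zero]; ring
  rw [hz] at hT
  exact Tendsto.congr' (Filter.EventuallyEq.symm heq) hT

end

/-- Boundary limits at `0⁺` of the brackets of `f_{±ν}(x) = x^{1/2} J_{±ν}(xs)` against the
weights `x^{1/2+ν}` and `x^{1/2−ν}`, for `ν ∈ (0,1)` and `s > 0`: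
(a) `[f_ν, x^{1/2+ν}]ₓ → 0`; (b) `[f_{−ν}, x^{1/2+ν}]ₓ → −2^{1+ν} s^{−ν}/Γ(−ν)`;
(c) `[f_ν, x^{1/2−ν}]ₓ → −s^ν/(2^{ν−1} Γ(ν))`; (d) `[f_{−ν}, x^{1/2−ν}]ₓ → 0`. -/
theorem stmt11 (ν s : ℝ) (hν : ν ∈ Ioo (0:ℝ) 1) (hs : 0 < s) :
    Tendsto (fun x => wBracketR (fun y => y ^ ((1:ℝ)/2) * besselJ ν (y * s))
        (fun y => y ^ ((1:ℝ)/2 + ν)) x) (nhdsWithin 0 (Ioi 0)) (nhds 0) ∧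
    Tendsto (fun x => wBracketR (fun y => y ^ ((1:ℝ)/2) * besselJ (-ν) (y * s))
        (fun y => y ^ ((1:ℝ)/2 + ν)) x) (nhdsWithin 0 (Ioi 0))
      (nhds (-(2 ^ (1 + ν) * s ^ (-ν)) / Real.Gamma (-ν))) ∧
    Tendsto (fun x => wBracketR (fun y => y ^ ((1:ℝ)/2) * besselJ ν (y * s))
        (fun y => y ^ ((1:ℝ)/2 - ν)) x) (nhdsWithin 0 (Ioi 0))
      (nhds (-(s ^ ν) / (2 ^ (ν - 1) * Real.Gamma ν))) ∧
    Tendsto (fun x => wBracketR (fun y => y ^ ((1:ℝ)/2) * besselJ (-ν) (y * s))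
        (fun y => y ^ ((1:ℝ)/2 - ν)) x) (nhdsWithin 0 (Ioi 0)) (nhds 0) := by
  obtain ⟨hν0, hν1⟩ := hν
  have hμ1 : -1 < ν := by linarith
  have hμ2 : -1 < -ν := by linarith
  have hΓν : Real.Gamma ν ≠ 0 := (Real.Gamma_pos_of_pos hν0).ne'
  have hΓmν : Real.Gamma (-ν) ≠ 0 := by
    apply Real.Gamma_ne_zero
    intro m
    rcases m with _ | m
    · simpa using hν0.ne'
    · intro h
      have : ν = (m:ℝ) + 1 := by push_cast at h; linarith
      have : (1:ℝ) ≤ ν := by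
        rw [this]; have := m.cast_nonneg (α := ℝ); linarith
      linarith
  have h2ν : (2:ℝ)^ν ≠ 0 := (Real.rpow_pos_of_pos two_pos ν).ne'
  refine ⟨tendsto_same hμ1 hs, ?_, ?_, ?_⟩
  · have hT := tendsto_mixed hμ2 hs ν (by ring)
    have hc : ((s/2:ℝ))^(-ν) * ((ν - -ν) * (1/Real.Gamma (-ν+1)))
        = -(2 ^ (1 + ν) * s ^ (-ν)) / Real.Gamma (-ν) := by
      rw [show (-ν+1 : ℝ) = -ν + 1 by ring, Real.Gamma_add_one (by linarith : -ν ≠ 0),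
        Real.div_rpow hs.le (by norm_num : (0:ℝ) ≤ 2),
        Real.rpow_neg (by norm_num : (0:ℝ) ≤ 2),
        Real.rpow_add two_pos 1 ν, Real.rpow_one]
      field_simp
      ring
    rwa [hc] at hT
  · have hT := tendsto_mixed hμ1 hs (-ν) (by ring)
    have hc : ((s/2:ℝ))^ν * ((-ν - ν) * (1/Real.Gamma (ν+1)))
        = -(s ^ ν) / (2 ^ (ν - 1) * Real.Gamma ν) := by
      rw [Real.Gamma_add_one hν0.ne',
        Real.div_rpow hs.le (by norm_num : (0:ℝ) ≤ 2),
        Real.rpow_sub two_pos ν 1, Real.rpow_one]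
      field_simp
      ring
    have hfun : (fun x => wBracketR (fun y => y ^ ((1:ℝ)/2) * besselJ ν (y * s))
        (fun y => y ^ ((1:ℝ)/2 - ν)) x)
        = (fun x => wBracketR (fun y => y ^ ((1:ℝ)/2) * besselJ ν (y * s))
        (fun y => y ^ ((1:ℝ)/2 + -ν)) x) := by
      simp only [sub_eq_add_neg]
    rw [hfun, ← hc]
    exact hT
  · have hT := tendsto_same hμ2 hs
    have hfun : (fun x => wBracketR (fun y => y ^ ((1:ℝ)/2) * besselJ (-ν) (y * s))
        (fun y => y ^ ((1:ℝ)/2 - ν)) x)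
        = (fun x => wBracketR (fun y => y ^ ((1:ℝ)/2) * besselJ (-ν) (y * s))
        (fun y => y ^ ((1:ℝ)/2 + -ν)) x) := by
      simp only [sub_eq_add_neg]
    rw [hfun]
    exact hT
end

section
/- For α ∈ (0, 1/2] define u_α : (0, 1/2) → ℝ by u_α(x) = x^{1/2}(−log x)^{−α}. Then ∫₀^{1/2} |u_α'(x)|² dx = ∞; in particular u_α does not belong to H¹ on any neighbourhood of 0. (Combined with the finiteness of ∫₀^{1/2}|u_α' − u_α/(2x)|² dx, this shows that the form domain of the Friedrichs extension of the Bessel operator with ν = 0 strictly contains H¹₀.) -/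
open MeasureTheory Set Filter

lemma hasDerivAt_u (α x : ℝ) (hx0 : 0 < x) (hx1 : x < 1) :
    HasDerivAt (fun y : ℝ => y ^ ((1:ℝ)/2) * (-Real.log y) ^ (-α))
      ((1/2) * x ^ (-(1:ℝ)/2) * (-Real.log x) ^ (-α)
        + α * x ^ (-(1:ℝ)/2) * (-Real.log x) ^ (-α-1)) x := by
  have hlog : 0 < -Real.log x := by have := Real.log_neg hx0 hx1; linarith
  have h1 : HasDerivAt (fun y : ℝ => y ^ ((1:ℝ)/2)) ((1/2) * x ^ ((1:ℝ)/2 - 1)) x :=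
    Real.hasDerivAt_rpow_const (Or.inl hx0.ne')
  have h2 : HasDerivAt (fun y : ℝ => -Real.log y) (-x⁻¹) x := (Real.hasDerivAt_log hx0.ne').neg
  have h3 : HasDerivAt (fun t : ℝ => t ^ (-α)) ((-α) * (-Real.log x) ^ (-α - 1)) (-Real.log x) :=
    Real.hasDerivAt_rpow_const (Or.inl hlog.ne')
  have h4 : HasDerivAt (fun y : ℝ => (-Real.log y) ^ (-α)) ((-α) * (-Real.log x) ^ (-α - 1) * -x⁻¹) x := by have h := h3.comp x h2; exact h
  have h5 := h1.mul h4
  refine h5.congr_deriv ?_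
  have e1 : x ^ ((1:ℝ)/2 - 1) = x ^ (-(1:ℝ)/2) := by norm_num
  have e2 : x ^ ((1:ℝ)/2) * x⁻¹ = x ^ (-(1:ℝ)/2) := by
    rw [← Real.rpow_neg_one x, ← Real.rpow_add hx0]; norm_num
  have e3 : x ^ ((1:ℝ)/2) * (-α * (-Real.log x) ^ (-α - 1) * -x⁻¹)
      = α * x ^ (-(1:ℝ)/2) * (-Real.log x) ^ (-α-1) := by rw [← e2]; ring
  rw [e1, ← e3]


lemma hasDerivAt_G (x : ℝ) (hx0 : 0 < x) (hx1 : x < 1) :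
    HasDerivAt (fun y : ℝ => -Real.log (-Real.log y)) ((x * (-Real.log x))⁻¹) x := by
  have hlog : 0 < -Real.log x := by have := Real.log_neg hx0 hx1; linarith
  have h2 : HasDerivAt (fun y : ℝ => -Real.log y) (-x⁻¹) x := (Real.hasDerivAt_log hx0.ne').neg
  have h3 : HasDerivAt Real.log (-Real.log x)⁻¹ (-Real.log x) := Real.hasDerivAt_log hlog.ne'
  have h4 := (h3.comp x h2).neg
  refine h4.congr_deriv ?_
  field_simp

lemma tendsto_loglog : Tendsto (fun δ : ℝ => Real.log (-Real.log δ)) (nhdsWithin 0 (Ioi 0)) atTop := by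
  apply Real.tendsto_log_atTop.comp
  exact tendsto_neg_atTop_iff.mpr Real.tendsto_log_nhdsGT_zero

lemma div_lemma (ε : ℝ) (hε0 : 0 < ε) (hε1 : ε < 1) :
    ∫⁻ x in Ioo (0:ℝ) ε, ENNReal.ofReal ((x * (-Real.log x))⁻¹) = ⊤ := by
  set g : ℝ → ℝ := fun x => (x * (-Real.log x))⁻¹ with hg
  have key : ∀ δ, δ ∈ Ioo (0:ℝ) ε →
      ENNReal.ofReal (Real.log (-Real.log δ) - Real.log (-Real.log ε))
        ≤ ∫⁻ x in Ioo (0:ℝ) ε, ENNReal.ofReal (g x) := by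
    intro δ hδ
    have hδ0 := hδ.1
    have hδε := hδ.2
    have hsub : Icc δ ε ⊆ Ioo 0 1 := fun x hx => ⟨lt_of_lt_of_le hδ0 hx.1, lt_of_le_of_lt hx.2 hε1⟩
    have hcont : ContinuousOn g (Icc δ ε) := by
      apply ContinuousOn.inv₀
      · exact continuousOn_id.mul ((Real.continuousOn_log.mono (fun x hx => ne_of_gt (hsub hx).1)).neg)
      · intro x hx
        have h1 := (hsub hx).1
        have h2 : 0 < -Real.log x := by
          have := Real.log_neg h1 (hsub hx).2; linarith
        positivity
    have hint : IntervalIntegrable g volume δ ε :=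
      (hcont.intervalIntegrable_of_Icc hδε.le)
    have heq : ∫ x in δ..ε, g x = (-Real.log (-Real.log ε)) - (-Real.log (-Real.log δ)) := by
      apply intervalIntegral.integral_eq_sub_of_hasDerivAt
      · intro x hx
        rw [uIcc_of_le hδε.le] at hx
        exact hasDerivAt_G x (hsub hx).1 (hsub hx).2
      · exact hint
    have hIoc : IntegrableOn g (Ioc δ ε) volume := (intervalIntegrable_iff_integrableOn_Ioc_of_le hδε.le).mp hint
    have hIoo : IntegrableOn g (Ioo δ ε) volume := hIoc.mono_set Ioo_subset_Ioc_self
    have hnn : 0 ≤ᵐ[volume.restrict (Ioo δ ε)] g := by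
      filter_upwards [ae_restrict_mem measurableSet_Ioo] with x hx
      have h1 : 0 < x := lt_trans hδ0 hx.1
      have h2 : 0 < -Real.log x := by
        have := Real.log_neg h1 (lt_trans hx.2 hε1); linarith
      positivity
    have h1 : ENNReal.ofReal (∫ x in Ioo δ ε, g x) = ∫⁻ x in Ioo δ ε, ENNReal.ofReal (g x) :=
      ofReal_integral_eq_lintegral_ofReal hIoo hnn
    have h2 : ∫ x in Ioo δ ε, g x = Real.log (-Real.log δ) - Real.log (-Real.log ε) := by
      rw [← integral_Ioc_eq_integral_Ioo, ← intervalIntegral.integral_of_le hδε.le, heq]; ring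
    calc ENNReal.ofReal (Real.log (-Real.log δ) - Real.log (-Real.log ε))
        = ∫⁻ x in Ioo δ ε, ENNReal.ofReal (g x) := by rw [← h1, h2]
      _ ≤ ∫⁻ x in Ioo (0:ℝ) ε, ENNReal.ofReal (g x) :=
          lintegral_mono_set (fun x hx => ⟨lt_trans hδ0 hx.1, hx.2⟩)
  by_contra h
  set I := ∫⁻ x in Ioo (0:ℝ) ε, ENNReal.ofReal (g x) with hI
  have hItop : I ≠ ⊤ := h
  have hev : ∀ᶠ δ in nhdsWithin (0:ℝ) (Ioi 0),
      Real.log (-Real.log δ) ≥ I.toReal + 1 + Real.log (-Real.log ε) :=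
    tendsto_loglog.eventually_ge_atTop _
  have hmem : Ioo (0:ℝ) ε ∈ nhdsWithin (0:ℝ) (Ioi 0) :=
    Ioo_mem_nhdsGT_of_mem ⟨le_refl 0, hε0⟩
  obtain ⟨δ, hδ1, hδ2⟩ := (hev.and (eventually_of_mem hmem (fun x hx => hx))).exists
  have := key δ hδ2
  have hle : ENNReal.ofReal (I.toReal + 1) ≤ I := le_trans (by
    apply ENNReal.ofReal_le_ofReal; linarith) this
  rw [ENNReal.ofReal_le_iff_le_toReal hItop] at hle
  linarith [ENNReal.toReal_nonneg (a := I)]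

lemma pointwise_bound (α : ℝ) (hα : α ∈ Ioc (0:ℝ) (1/2)) (x : ℝ) (hx : x ∈ Ioo (0:ℝ) (1/2)) :
    ((1/4) * (Real.log 2) ^ (1 - 2*α)) * (x * (-Real.log x))⁻¹
      ≤ (deriv (fun y : ℝ => y ^ ((1:ℝ)/2) * (-Real.log y) ^ (-α)) x) ^ 2 := by
  have hx0 := hx.1
  have hx1 : x < 1 := lt_trans hx.2 (by norm_num)
  have hlog2 : (0:ℝ) < Real.log 2 := Real.log_pos (by norm_num)
  have hL2 : Real.log 2 ≤ -Real.log x := by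
    have h := Real.log_lt_log hx0 hx.2
    rw [show (1:ℝ)/2 = 2⁻¹ by norm_num, Real.log_inv] at h
    linarith
  set L := -Real.log x with hLdef
  have hL : 0 < L := lt_of_lt_of_le hlog2 hL2
  have hd : deriv (fun y : ℝ => y ^ ((1:ℝ)/2) * (-Real.log y) ^ (-α)) x
      = (1/2) * x ^ (-(1:ℝ)/2) * L ^ (-α) + α * x ^ (-(1:ℝ)/2) * L ^ (-α-1) :=
    (hasDerivAt_u α x hx0 hx1).deriv
  rw [hd]
  have hxr : 0 ≤ x ^ (-(1:ℝ)/2) := Real.rpow_nonneg hx0.le _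
  have ha : 0 ≤ (1/2) * x ^ (-(1:ℝ)/2) * L ^ (-α) := by positivity
  have hb : 0 ≤ α * x ^ (-(1:ℝ)/2) * L ^ (-α-1) := by
    have := hα.1
    positivity
  have step1 : ((1/2) * x ^ (-(1:ℝ)/2) * L ^ (-α)) ^ 2
      ≤ ((1/2) * x ^ (-(1:ℝ)/2) * L ^ (-α) + α * x ^ (-(1:ℝ)/2) * L ^ (-α-1)) ^ 2 := by
    nlinarith [ha, hb]
  have ex : (x ^ (-(1:ℝ)/2))^2 = x⁻¹ := by
    rw [← Real.rpow_natCast (x ^ (-(1:ℝ)/2)) 2, ← Real.rpow_mul hx0.le]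
    norm_num
    exact Real.rpow_neg_one x
  have eL : (L ^ (-α))^2 = L ^ (-(2*α)) := by
    rw [← Real.rpow_natCast (L ^ (-α)) 2, ← Real.rpow_mul hL.le]
    norm_num
    ring_nf
  have esq : ((1/2) * x ^ (-(1:ℝ)/2) * L ^ (-α)) ^ 2 = (1/4) * x⁻¹ * L ^ (-(2*α)) := by
    rw [mul_pow, mul_pow, ex, eL]; norm_num
  have hLsplit : L ^ (-(2*α)) = L ^ (1 - 2*α) * L⁻¹ := by
    rw [← Real.rpow_neg_one L, ← Real.rpow_add hL]; ring_nf
  have hmono : (Real.log 2) ^ (1 - 2*α) ≤ L ^ (1 - 2*α) :=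
    Real.rpow_le_rpow hlog2.le hL2 (by linarith [hα.2])
  have key : ((1/4) * (Real.log 2) ^ (1 - 2*α)) * (x * L)⁻¹
      ≤ (1/4) * x⁻¹ * L ^ (-(2*α)) := by
    rw [hLsplit, mul_inv]
    have hxinv : 0 ≤ x⁻¹ := by positivity
    have hLinv : 0 ≤ L⁻¹ := by positivity
    calc (1/4) * (Real.log 2) ^ (1 - 2*α) * (x⁻¹ * L⁻¹)
        = (1/4) * x⁻¹ * ((Real.log 2) ^ (1 - 2*α) * L⁻¹) := by ring
      _ ≤ (1/4) * x⁻¹ * (L ^ (1 - 2*α) * L⁻¹) := by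
          apply mul_le_mul_of_nonneg_left (mul_le_mul_of_nonneg_right hmono hLinv) (by positivity)
      _ = (1/4) * x⁻¹ * (L ^ (1 - 2*α) * L⁻¹) := rfl
  calc ((1/4) * (Real.log 2) ^ (1 - 2*α)) * (x * L)⁻¹
      ≤ (1/4) * x⁻¹ * L ^ (-(2*α)) := key
    _ = ((1/2) * x ^ (-(1:ℝ)/2) * L ^ (-α)) ^ 2 := esq.symm
    _ ≤ _ := step1

/-- For `α ∈ (0,1/2]`, the function `u_α(x) = x^{1/2}(−log x)^{−α}` on `(0,1/2)` satisfies
`∫₀^{1/2} |u_α'(x)|² dx = ∞`; in particular `∫₀^ε |u_α'|² = ∞` for every `ε ∈ (0,1/2]`,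
so `u_α` is not in `H¹` on any neighbourhood of `0`. -/
theorem stmt18 (α : ℝ) (hα : α ∈ Ioc (0:ℝ) (1/2)) :
    (∫⁻ x in Ioo (0:ℝ) (1/2),
      ENNReal.ofReal
        ((deriv (fun y : ℝ => y ^ ((1:ℝ)/2) * (-Real.log y) ^ (-α)) x) ^ 2) = ⊤) ∧
    ∀ ε : ℝ, ε ∈ Ioc (0:ℝ) (1/2) →
      ∫⁻ x in Ioo (0:ℝ) ε,
        ENNReal.ofReal
          ((deriv (fun y : ℝ => y ^ ((1:ℝ)/2) * (-Real.log y) ^ (-α)) x) ^ 2) = ⊤ := by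
  have main : ∀ ε : ℝ, ε ∈ Ioc (0:ℝ) (1/2) →
      ∫⁻ x in Ioo (0:ℝ) ε,
        ENNReal.ofReal
          ((deriv (fun y : ℝ => y ^ ((1:ℝ)/2) * (-Real.log y) ^ (-α)) x) ^ 2) = ⊤ := by
    intro ε hε
    set c : ℝ := (1/4) * (Real.log 2) ^ (1 - 2*α) with hc
    have hlog2 : (0:ℝ) < Real.log 2 := Real.log_pos (by norm_num)
    have hcpos : 0 < c := by positivity
    have hmeasg : Measurable fun x : ℝ => ENNReal.ofReal ((x * (-Real.log x))⁻¹) :=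
      ENNReal.measurable_ofReal.comp ((measurable_id.mul Real.measurable_log.neg).inv)
    have hmeasd : Measurable fun x : ℝ =>
        ENNReal.ofReal ((deriv (fun y : ℝ => y ^ ((1:ℝ)/2) * (-Real.log y) ^ (-α)) x) ^ 2) :=
      ENNReal.measurable_ofReal.comp
        ((measurable_deriv (fun y : ℝ => y ^ ((1:ℝ)/2) * (-Real.log y) ^ (-α))).pow_const 2)
    have hlow : ∫⁻ x in Ioo (0:ℝ) ε, ENNReal.ofReal (c * (x * (-Real.log x))⁻¹)
        ≤ ∫⁻ x in Ioo (0:ℝ) ε,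
          ENNReal.ofReal ((deriv (fun y : ℝ => y ^ ((1:ℝ)/2) * (-Real.log y) ^ (-α)) x) ^ 2) := by
      apply setLIntegral_mono hmeasd
      intro x hx
      apply ENNReal.ofReal_le_ofReal
      exact pointwise_bound α hα x ⟨hx.1, lt_of_lt_of_le hx.2 hε.2⟩
    have hconst : ∫⁻ x in Ioo (0:ℝ) ε, ENNReal.ofReal (c * (x * (-Real.log x))⁻¹) = ⊤ := by
      have : ∀ x : ℝ, ENNReal.ofReal (c * (x * (-Real.log x))⁻¹)
          = ENNReal.ofReal c * ENNReal.ofReal ((x * (-Real.log x))⁻¹) := fun x =>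
        ENNReal.ofReal_mul hcpos.le
      simp only [this]
      rw [lintegral_const_mul _ hmeasg, div_lemma ε hε.1 (lt_of_le_of_lt hε.2 (by norm_num))]
      exact ENNReal.mul_top (by simp [ENNReal.ofReal_eq_zero]; linarith)
    exact top_le_iff.mp (hconst ▸ hlow)
  exact ⟨main (1/2) ⟨by norm_num, le_refl _⟩, main⟩
end
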